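/- arXiv:0801.1079 — 4 statements merged into one kernel-verified Lean document; each statement's English description precedes it below -/
import Mathlib

section
/- Let 0 < ᾱ < 1/(τ−1) and let α_0 = α_0(N), α_1 = α_1(N) ∈ (0, ᾱ) satisfy α_0(N) ≤ α_1(N) − ε(N). Then, for all sufficiently large N, P( Σ_{i=1}^N Λ_i·1{Λ_i ∈ (N^{α_0}, N^{α_1}]} / (N^{1−(τ−2)α_0}·E[Λ]) ∈ (1/5, 5) ) ≥ 1 − 2·(E[Λ]/2)^{−(τ−1)} · N^{−(1−(τ−1)ᾱ)(τ−2)}. -/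
open MeasureTheory ProbabilityTheory Filter Set
open scoped NNReal ENNReal

noncomputable section

/-- The standing assumptions on the auxiliary function `ℓ`:
increasing, `ℓ 1 = 1`, `ℓ(N)/logloglog N → 0` and `ℓ(N)/loglogloglog N → ∞`. -/
def IsAdmissibleEll (ℓ : ℕ → ℝ) : Prop :=
  StrictMono ℓ ∧ ℓ 1 = 1 ∧
    Tendsto (fun N : ℕ => ℓ N / Real.log (Real.log (Real.log N))) atTop (nhds 0) ∧
    Tendsto (fun N : ℕ => ℓ N / Real.log (Real.log (Real.log (Real.log N)))) atTop atTop

/-- `ε(N) = ℓ(N) / log N`. -/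
def epsFun (ℓ : ℕ → ℝ) (N : ℕ) : ℝ := ℓ N / Real.log N

lemma paretoMeasure_Ioi {r : ℝ} (hr : 0 < r) {a : ℝ} (ha : 1 ≤ a) :
    paretoMeasure 1 r (Set.Ioi a) = ENNReal.ofReal (a ^ (-r)) := by
  have ha0 : (0:ℝ) < a := lt_of_lt_of_le one_pos ha
  rw [paretoMeasure, withDensity_apply _ measurableSet_Ioi]
  have h1 : ∀ x ∈ Set.Ioi a, paretoPDF 1 r x = ENNReal.ofReal (r * x ^ (-(r+1))) := by
    intro x hx
    rw [paretoPDF_of_le (le_trans ha (le_of_lt hx))]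
    simp [Real.one_rpow]
  rw [setLIntegral_congr_fun measurableSet_Ioi h1]
  rw [← ofReal_integral_eq_lintegral_ofReal]
  · congr 1
    rw [MeasureTheory.integral_const_mul, integral_Ioi_rpow_of_lt (by linarith) ha0]
    have h2 : -(r+1)+1 = -r := by ring
    rw [h2]
    field_simp
  · exact (integrableOn_Ioi_rpow_of_lt (by linarith) ha0).const_mul r
  · rw [EventuallyLE, ae_restrict_iff' measurableSet_Ioi]
    refine ae_of_all _ fun x hx => ?_
    have hx0 : (0:ℝ) < x := lt_trans ha0 hx
    positivity

lemma map_pareto {τ : ℝ} (hτ1 : 1 < τ) {Ω : Type} [MeasurableSpace Ω] (μ : Measure Ω)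
    [IsProbabilityMeasure μ] {f : Ω → ℝ} (hf : Measurable f) (h1 : ∀ ω, 1 ≤ f ω)
    (htail : ∀ x : ℝ, 1 ≤ x → μ {ω | x < f ω} = ENNReal.ofReal (x ^ (-(τ-1)))) :
    Measure.map f μ = paretoMeasure 1 (τ-1) := by
  have hr : (0:ℝ) < τ - 1 := by linarith
  have hprob : IsProbabilityMeasure (paretoMeasure 1 (τ-1)) :=
    isProbabilityMeasure_paretoMeasure one_pos hr
  have : IsProbabilityMeasure (Measure.map f μ) := Measure.isProbabilityMeasure_map hf.aemeasurable
  refine Measure.ext_of_Iic _ _ (fun a => ?_)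
  rw [Measure.map_apply hf measurableSet_Iic]
  rcases le_or_gt 1 a with hcase | hcase
  · have hpre : f ⁻¹' (Iic a) = {ω | a < f ω}ᶜ := by
      ext ω; simp [not_lt]
    have hmeas : MeasurableSet {ω | a < f ω} := hf measurableSet_Ioi
    rw [hpre, measure_compl hmeas (measure_ne_top _ _), htail a hcase, measure_univ]
    have : Iic a = (Ioi a)ᶜ := by ext x; simp [not_lt]
    rw [this, measure_compl measurableSet_Ioi (measure_ne_top _ _), measure_univ,
      paretoMeasure_Ioi hr hcase]
  · have hpre : f ⁻¹' (Iic a) = ∅ := by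
      ext ω
      simp only [mem_preimage, mem_Iic, mem_empty_iff_false, iff_false, not_le]
      exact lt_of_lt_of_le hcase (h1 ω)
    rw [hpre, measure_empty]
    symm
    have h0 : paretoMeasure 1 (τ-1) (Set.Iio 1) = 0 := by
      rw [paretoMeasure, withDensity_apply _ measurableSet_Iio]
      exact lintegral_paretoPDF_of_le le_rfl
    exact measure_mono_null (fun x hx => lt_of_le_of_lt hx hcase) h0

lemma pareto_moment {τ : ℝ} (hτ1 : 1 < τ) (n : ℕ) (hne : ((n:ℝ) - τ) ≠ -1) {a b : ℝ}
    (ha : 1 ≤ a) (hab : a ≤ b) :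
    ∫ x, (Set.Ioc a b).indicator (fun x => x ^ n) x ∂(paretoMeasure 1 (τ-1))
      = (τ-1)/(τ-1-n) * (a ^ ((n:ℝ) - (τ-1)) - b ^ ((n:ℝ) - (τ-1))) := by
  have ha0 : (0:ℝ) < a := lt_of_lt_of_le one_pos ha
  have hr : (0:ℝ) < τ - 1 := by linarith
  have hpdf_nn : ∀ x, 0 ≤ paretoPDFReal 1 (τ-1) x :=
    paretoPDFReal_nonneg one_pos.le hr.le
  have hkey : paretoPDF 1 (τ-1) =
      fun x => ((Real.toNNReal (paretoPDFReal 1 (τ-1) x) : ℝ≥0) : ℝ≥0∞) := rfl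
  rw [paretoMeasure, hkey,
    integral_withDensity_eq_integral_smul
      ((measurable_paretoPDFReal 1 (τ-1)).real_toNNReal) _]
  have hsmul : (fun x => (Real.toNNReal (paretoPDFReal 1 (τ-1) x)) •
      (Set.Ioc a b).indicator (fun x => x ^ n) x)
      = fun x => (Set.Ioc a b).indicator
          (fun x => paretoPDFReal 1 (τ-1) x * x ^ n) x := by
    funext x
    rw [NNReal.smul_def, smul_eq_mul, Real.coe_toNNReal _ (hpdf_nn x),
      Set.indicator_mul_right]
  rw [hsmul, integral_indicator measurableSet_Ioc]
  have hcongr : ∀ x ∈ Set.Ioc a b,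
      paretoPDFReal 1 (τ-1) x * x ^ n = (τ-1) * x ^ ((n:ℝ) - τ) := by
    intro x hx
    have hx0 : (0:ℝ) < x := lt_of_lt_of_le ha0 hx.1.le
    have hx1 : (1:ℝ) ≤ x := le_trans ha hx.1.le
    rw [paretoPDFReal, if_pos hx1, Real.one_rpow, mul_one]
    rw [mul_assoc]
    congr 1
    rw [← Real.rpow_natCast x n, ← Real.rpow_add hx0]
    congr 1
    ring
  rw [setIntegral_congr_fun measurableSet_Ioc hcongr,
    ← intervalIntegral.integral_of_le hab, intervalIntegral.integral_const_mul,
    integral_rpow (Or.inr ⟨hne, by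
      rw [Set.uIcc_of_le hab]
      intro h0
      exact absurd h0.1 (by linarith)⟩)]
  have hs : (n:ℝ) - τ + 1 = (n:ℝ) - (τ-1) := by ring
  rw [hs]
  have hsne : (n:ℝ) - (τ-1) ≠ 0 := by
    intro h; apply hne; linarith [h]
  have h1 : τ - 1 - (n:ℝ) ≠ 0 := by
    intro h; apply hne; linarith [h]
  rw [div_mul_eq_mul_div, mul_div_assoc]
  congr 1
  rw [div_eq_div_iff hsne h1]
  ring

set_option maxHeartbeats 2000000 in
/-- Lemma 3.2 of Norros–Reittu. For i.i.d. Pareto(τ) capacities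
and `α_0(N) ≤ α_1(N) - ε(N)` in `(0, ᾱ)`, `ᾱ < 1/(τ-1)`, the aggregated capacity of the
tier `(N^{α_0}, N^{α_1}]` is, with probability at least
`1 - 2 (E[Λ]/2)^{-(τ-1)} N^{-(1-(τ-1)ᾱ)(τ-2)}`, within a factor `(1/5, 5)` of
`N^{1-(τ-2)α_0} E[Λ]`, for all sufficiently large `N`. -/
theorem tier_volume
    (τ : ℝ) (hτ : τ ∈ Set.Ioo (2 : ℝ) 3)
    (Ω : Type) [MeasurableSpace Ω] (μ : Measure Ω) [IsProbabilityMeasure μ]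
    (Λ : (N : ℕ) → Fin N → Ω → ℝ)
    (hΛ_meas : ∀ N i, Measurable (Λ N i))
    (hΛ_ge_one : ∀ N i ω, 1 ≤ Λ N i ω)
    (hΛ_indep : ∀ N, iIndepFun (Λ N) μ)
    (hΛ_pareto : ∀ (N : ℕ) (i : Fin N) (x : ℝ), 1 ≤ x →
      μ {ω | x < Λ N i ω} = ENNReal.ofReal (x ^ (-(τ - 1))))
    (ℓ : ℕ → ℝ) (hℓ : IsAdmissibleEll ℓ)
    (abar : ℝ) (habar : 0 < abar ∧ abar < 1 / (τ - 1))
    (α₀ α₁ : ℕ → ℝ)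
    (hα₀ : ∀ N, α₀ N ∈ Set.Ioo 0 abar) (hα₁ : ∀ N, α₁ N ∈ Set.Ioo 0 abar)
    (hgap : ∀ N, α₀ N ≤ α₁ N - epsFun ℓ N) :
    ∀ᶠ N : ℕ in atTop,
      1 - 2 * ENNReal.ofReal ((((τ - 1) / (τ - 2)) / 2) ^ (-(τ - 1)) *
            (N : ℝ) ^ (-((1 - (τ - 1) * abar) * (τ - 2)))) ≤
        μ {ω |
          (∑ i, Set.indicator
              {x : ℝ | (N : ℝ) ^ α₀ N < x ∧ x ≤ (N : ℝ) ^ α₁ N} id (Λ N i ω)) /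
              ((N : ℝ) ^ (1 - (τ - 2) * α₀ N) * ((τ - 1) / (τ - 2))) ∈
            Set.Ioo (1 / 5 : ℝ) 5} := by
  obtain ⟨hτ2, hτ3⟩ := hτ
  obtain ⟨habar0, habar1⟩ := habar
  have hτ20 : (0:ℝ) < τ - 2 := by linarith
  have hτ30 : (0:ℝ) < 3 - τ := by linarith
  have hτ10 : (0:ℝ) < τ - 1 := by linarith
  set E : ℝ := (τ - 1) / (τ - 2) with hE
  have hE2 : 2 < E := by rw [hE, lt_div_iff₀ hτ20]; linarith
  have hEpos : (0:ℝ) < E := by linarith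
  have he1 : 0 < 1 - (τ-1) * abar := by
    have h := (lt_div_iff₀ hτ10).mp habar1
    have h2 : (τ-1) * abar < 1 := by rwa [mul_comm] at h
    linarith
  set C₁ : ℝ := ((τ-1)/(3-τ)) / ((E/2)^2) with hC₁
  set C₂ : ℝ := 2 * (E/2) ^ (-(τ-1)) with hC₂
  have hC₂pos : 0 < C₂ := by rw [hC₂]; positivity
  -- eventual facts
  have hd : Tendsto (fun N : ℕ => Real.log (Real.log (Real.log (Real.log N)))) atTop atTop := by
    have h : Tendsto (fun x : ℝ => Real.log (Real.log (Real.log (Real.log x)))) atTop atTop :=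
      Real.tendsto_log_atTop.comp (Real.tendsto_log_atTop.comp
        (Real.tendsto_log_atTop.comp Real.tendsto_log_atTop))
    exact h.comp tendsto_natCast_atTop_atTop
  have ev1 : ∀ᶠ N : ℕ in atTop, 2/(τ-2) ≤ ℓ N := by
    have h1 : ∀ᶠ N : ℕ in atTop, max (2/(τ-2)) 0 + 1 ≤
        ℓ N / Real.log (Real.log (Real.log (Real.log N))) :=
      hℓ.2.2.2.eventually_ge_atTop _
    have h2 : ∀ᶠ N : ℕ in atTop,
        1 ≤ Real.log (Real.log (Real.log (Real.log N))) := hd.eventually_ge_atTop 1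
    filter_upwards [h1, h2] with N hr hdN
    set d := Real.log (Real.log (Real.log (Real.log N))) with hddef
    have hC : (0:ℝ) ≤ max (2/(τ-2)) 0 + 1 := by positivity
    have hdne : d ≠ 0 := by intro h; rw [h] at hdN; linarith
    have hrnn : 0 ≤ ℓ N / d := le_trans hC hr
    have hfin : max (2/(τ-2)) 0 + 1 ≤ ℓ N := by
      calc max (2/(τ-2)) 0 + 1 = (max (2/(τ-2)) 0 + 1) * 1 := (mul_one _).symm
        _ ≤ (ℓ N / d) * d := mul_le_mul hr hdN zero_le_one hrnn
        _ = ℓ N := div_mul_cancel₀ _ hdne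
    have : 2/(τ-2) ≤ max (2/(τ-2)) 0 + 1 := le_trans (le_max_left _ _) (by linarith)
    linarith
  have ev2 : ∀ᶠ N : ℕ in atTop, C₁ / C₂ ≤ (N:ℝ) ^ ((1-(τ-1)*abar)*(3-τ)) := by
    have h : Tendsto (fun N : ℕ => (N:ℝ) ^ ((1-(τ-1)*abar)*(3-τ))) atTop atTop :=
      (tendsto_rpow_atTop (by positivity)).comp tendsto_natCast_atTop_atTop
    exact h.eventually_ge_atTop _
  have ev3 : ∀ᶠ N : ℕ in atTop, 2 ≤ N := eventually_ge_atTop 2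
  filter_upwards [ev1, ev2, ev3] with N hℓN hNrpow hN2
  -- basic facts about N
  have hN1 : (1:ℝ) ≤ (N:ℝ) := by exact_mod_cast le_trans one_le_two hN2
  have hN0 : (0:ℝ) < (N:ℝ) := by linarith
  have hN1' : (1:ℝ) < (N:ℝ) := by
    have : (2:ℝ) ≤ (N:ℝ) := by exact_mod_cast hN2
    linarith
  have hlogN : 0 < Real.log N := Real.log_pos hN1'
  obtain ⟨hα₀0, hα₀a⟩ := hα₀ N
  obtain ⟨hα₁0, hα₁a⟩ := hα₁ N
  have hℓpos : 0 < ℓ N := lt_of_lt_of_le (by positivity) hℓN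
  have hεnn : 0 ≤ epsFun ℓ N := div_nonneg hℓpos.le hlogN.le
  have hα01 : α₀ N ≤ α₁ N := le_trans (hgap N) (by linarith)
  set a : ℝ := (N:ℝ) ^ α₀ N with hadef
  set b : ℝ := (N:ℝ) ^ α₁ N with hbdef
  have ha1 : 1 ≤ a := Real.one_le_rpow hN1 hα₀0.le
  have hab : a ≤ b := Real.rpow_le_rpow_of_exponent_le hN1 hα01
  have hb1 : 1 ≤ b := le_trans ha1 hab
  have ha0 : (0:ℝ) < a := by linarith
  have hb0 : (0:ℝ) < b := by linarith
  rw [show {x : ℝ | a < x ∧ x ≤ b} = Set.Ioc a b from rfl]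
  set m : ℝ := (N:ℝ) ^ (1 - (τ - 2) * α₀ N) * E with hm
  have hmpos : 0 < m := mul_pos (Real.rpow_pos_of_pos hN0 _) hEpos
  -- the truncated variables
  set X : Fin N → Ω → ℝ := fun i ω => (Set.Ioc a b).indicator id (Λ N i ω) with hX
  have hXmeas : ∀ i, Measurable (X i) := fun i =>
    (measurable_id.indicator measurableSet_Ioc).comp (hΛ_meas N i)
  have hXnn : ∀ i ω, 0 ≤ X i ω := by
    intro i ω
    by_cases h : Λ N i ω ∈ Set.Ioc a b
    · rw [hX]; dsimp only; rw [Set.indicator_of_mem h]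
      exact le_trans (by linarith) h.1.le
    · rw [hX]; dsimp only; rw [Set.indicator_of_notMem h]
  have hXle : ∀ i ω, X i ω ≤ b := by
    intro i ω
    by_cases h : Λ N i ω ∈ Set.Ioc a b
    · rw [hX]; dsimp only; rw [Set.indicator_of_mem h]; exact h.2
    · rw [hX]; dsimp only; rw [Set.indicator_of_notMem h]; linarith
  have hX2 : ∀ i, MemLp (X i) 2 μ := fun i =>
    (memLp_top_of_bound (hXmeas i).aestronglyMeasurable b
      (ae_of_all _ fun ω => by
        rw [Real.norm_eq_abs, abs_of_nonneg (hXnn i ω)]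
        exact hXle i ω)).mono_exponent le_top
  -- moments
  have hmap : ∀ i, Measure.map (Λ N i) μ = paretoMeasure 1 (τ-1) := fun i =>
    map_pareto (by linarith) μ (hΛ_meas N i) (hΛ_ge_one N i) (hΛ_pareto N i)
  have hmom : ∀ (n : ℕ), ((n:ℝ) - τ ≠ -1) →
      ∀ i, ∫ ω, (Set.Ioc a b).indicator (fun x => x ^ n) (Λ N i ω) ∂μ
        = (τ-1)/(τ-1-n) * (a ^ ((n:ℝ) - (τ-1)) - b ^ ((n:ℝ) - (τ-1))) := by
    intro n hn i
    have hgm : Measurable (fun x : ℝ => x ^ n) := measurable_id.pow_const n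
    rw [← integral_map (hΛ_meas N i).aemeasurable
      (hgm.indicator measurableSet_Ioc).aestronglyMeasurable,
      hmap i, pareto_moment (by linarith) n hn ha1 hab]
  have hEX : ∀ i, ∫ ω, X i ω ∂μ = E * (a ^ (2-τ) - b ^ (2-τ)) := by
    intro i
    have h := hmom 1 (by push_cast; intro h; linarith) i
    push_cast at h
    rw [show (1:ℝ) - (τ-1) = 2 - τ from by ring, show τ - 1 - 1 = τ - 2 from by ring] at h
    simp only [pow_one] at h
    exact h
  have hEX2 : ∀ i, ∫ ω, (X i ω)^2 ∂μ = (τ-1)/(τ-3) * (a ^ (3-τ) - b ^ (3-τ)) := by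
    intro i
    have hpt : ∀ ω, (X i ω)^2 = (Set.Ioc a b).indicator (fun x => x^2) (Λ N i ω) := by
      intro ω
      by_cases h : Λ N i ω ∈ Set.Ioc a b
      · rw [hX]; dsimp only; rw [Set.indicator_of_mem h, Set.indicator_of_mem h]; rfl
      · rw [hX]; dsimp only
        rw [Set.indicator_of_notMem h, Set.indicator_of_notMem h]
        norm_num
    have h := hmom 2 (by push_cast; intro h; linarith) i
    push_cast at h
    rw [show (2:ℝ) - (τ-1) = 3 - τ from by ring, show τ - 1 - 2 = τ - 3 from by ring] at h
    simp_rw [hpt]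
    exact h
  -- the sum
  set S : Ω → ℝ := ∑ i, X i with hS
  have hSapp : ∀ ω, S ω = ∑ i, X i ω := by
    intro ω; rw [hS]; simp [Finset.sum_apply]
  have hSmem : MemLp S 2 μ := memLp_finset_sum' _ (fun i _ => hX2 i)
  have hSmeas : Measurable S := by
    rw [hS, show (∑ i, X i) = (fun ω => ∑ i, X i ω) from
      funext (fun ω => Finset.sum_apply ω Finset.univ X)]
    exact Finset.measurable_sum _ (fun i _ => hXmeas i)
  have hES : μ[S] = (N:ℝ) * (E * (a^(2-τ) - b^(2-τ))) := by
    have h : μ[S] = ∫ ω, ∑ i, X i ω ∂μ := by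
      apply integral_congr_ae
      exact ae_of_all _ fun ω => hSapp ω
    rw [h, integral_finset_sum _ (fun i _ => (hX2 i).integrable one_le_two)]
    simp only [hEX]
    rw [Finset.sum_const, Finset.card_univ, Fintype.card_fin, nsmul_eq_mul]
  -- rewriting in terms of powers of N
  have hNpow : ∀ (β c : ℝ), (N:ℝ) * ((N:ℝ) ^ β) ^ c = (N:ℝ) ^ (1 + β * c) := by
    intro β c
    rw [← Real.rpow_mul hN0.le, Real.rpow_add hN0, Real.rpow_one]
  have hNa : (N:ℝ) * a ^ (2-τ) = (N:ℝ) ^ (1 - (τ - 2) * α₀ N) := by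
    rw [hadef, hNpow, show 1 + α₀ N * (2-τ) = 1 - (τ-2) * α₀ N from by ring]
  have hNb : (N:ℝ) * b ^ (2-τ) = (N:ℝ) ^ (1 - (τ - 2) * α₁ N) := by
    rw [hbdef, hNpow, show 1 + α₁ N * (2-τ) = 1 - (τ-2) * α₁ N from by ring]
  have hES' : μ[S] = m - (N:ℝ) ^ (1 - (τ - 2) * α₁ N) * E := by
    rw [hES, show (N:ℝ) * (E * (a^(2-τ) - b^(2-τ)))
        = ((N:ℝ) * a^(2-τ)) * E - ((N:ℝ) * b^(2-τ)) * E from by ring, hNa, hNb, hm]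
  -- lower bound for the mean
  have hexp : Real.exp (-2) ≤ 1/4 := by
    have he2 : Real.exp 2 = Real.exp 1 * Real.exp 1 := by
      rw [← Real.exp_add]; norm_num
    have h2e : (2:ℝ) < Real.exp 1 := by
      have := Real.exp_one_gt_d9
      linarith
    have h4 : (4:ℝ) ≤ Real.exp 2 := by nlinarith [h2e]
    have hmul : Real.exp (-2) * Real.exp 2 = 1 := by
      rw [← Real.exp_add]; norm_num
    have hfin := mul_le_mul_of_nonneg_left h4 (Real.exp_pos (-2)).le
    rw [hmul] at hfin
    linarith
  have hθ : (N:ℝ) ^ (1 - (τ - 2) * α₁ N) ≤ (N:ℝ) ^ (1 - (τ - 2) * α₀ N) * (1/4) := by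
    have h1 : (1:ℝ) - (τ-2) * α₁ N = (1 - (τ-2) * α₀ N) + (-((τ-2) * (α₁ N - α₀ N))) := by ring
    rw [h1, Real.rpow_add hN0]
    apply mul_le_mul_of_nonneg_left _ (Real.rpow_nonneg hN0.le _)
    refine le_trans ?_ hexp
    rw [Real.rpow_def_of_pos hN0]
    apply Real.exp_le_exp.mpr
    have hge : epsFun ℓ N ≤ α₁ N - α₀ N := by linarith [hgap N]
    simp only [epsFun] at hge
    rw [div_le_iff₀ hlogN] at hge
    have h2 : 2 ≤ ℓ N * (τ-2) := by
      rw [div_le_iff₀ hτ20] at hℓN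
      linarith
    linarith [mul_le_mul_of_nonneg_left hge hτ20.le, h2]
  have hESlb : 3/4 * m ≤ μ[S] := by
    rw [hES']
    have h := mul_le_mul_of_nonneg_right hθ hEpos.le
    rw [hm]
    linarith [h]
  have hESub : μ[S] ≤ m := by
    rw [hES']
    have h : 0 ≤ (N:ℝ) ^ (1 - (τ - 2) * α₁ N) * E := by positivity
    linarith
  -- variance bounds
  have hvar_sum : variance S μ = ∑ i, variance (X i) μ := by
    rw [hS]
    refine IndepFun.variance_sum (fun i _ => hX2 i) ?_
    intro i _ j _ hij
    exact ((hΛ_indep N).indepFun hij).comp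
      (measurable_id.indicator measurableSet_Ioc) (measurable_id.indicator measurableSet_Ioc)
  have hb3 : b ^ (3-τ) ≤ (N:ℝ) ^ ((3-τ)*abar) := by
    rw [hbdef, ← Real.rpow_mul hN0.le]
    exact Real.rpow_le_rpow_of_exponent_le hN1
      (by linarith [mul_le_mul_of_nonneg_left hα₁a.le hτ30.le])
  have hvarXi : ∀ i, variance (X i) μ ≤ (τ-1)/(3-τ) * (N:ℝ) ^ ((3-τ)*abar) := by
    intro i
    have h1 : variance (X i) μ ≤ μ[(X i) ^ 2] :=
      variance_le_expectation_sq (hXmeas i).aestronglyMeasurable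
    have h2 : μ[(X i) ^ 2] = (τ-1)/(τ-3) * (a ^ (3-τ) - b ^ (3-τ)) := by
      rw [← hEX2 i]
      apply integral_congr_ae
      exact ae_of_all _ fun ω => by simp [Pi.pow_apply]
    have h3 : (τ-1)/(τ-3) * (a ^ (3-τ) - b ^ (3-τ)) ≤ (τ-1)/(3-τ) * b ^ (3-τ) := by
      have hid : (τ-1)/(τ-3) * (a ^ (3-τ) - b ^ (3-τ))
          = (τ-1)/(3-τ) * (b ^ (3-τ) - a ^ (3-τ)) := by
        rw [show τ - 3 = -(3-τ) from by ring, div_neg]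
        ring
      rw [hid]
      have ha3 : 0 ≤ a ^ (3-τ) := Real.rpow_nonneg ha0.le _
      have hpos : (0:ℝ) ≤ (τ-1)/(3-τ) := by positivity
      linarith [mul_le_mul_of_nonneg_left
        (show b^(3-τ) - a^(3-τ) ≤ b^(3-τ) from by linarith) hpos]
    have h4 : (τ-1)/(3-τ) * b ^ (3-τ) ≤ (τ-1)/(3-τ) * (N:ℝ) ^ ((3-τ)*abar) :=
      mul_le_mul_of_nonneg_left hb3 (by positivity)
    calc variance (X i) μ ≤ μ[(X i) ^ 2] := h1
      _ = (τ-1)/(τ-3) * (a ^ (3-τ) - b ^ (3-τ)) := h2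
      _ ≤ (τ-1)/(3-τ) * b ^ (3-τ) := h3
      _ ≤ (τ-1)/(3-τ) * (N:ℝ) ^ ((3-τ)*abar) := h4
  have hvarS' : variance S μ ≤ (τ-1)/(3-τ) * (N:ℝ) ^ (1 + (3-τ)*abar) := by
    rw [hvar_sum]
    calc ∑ i, variance (X i) μ
        ≤ ∑ _i : Fin N, (τ-1)/(3-τ) * (N:ℝ) ^ ((3-τ)*abar) :=
          Finset.sum_le_sum (fun i _ => hvarXi i)
      _ = (N:ℝ) * ((τ-1)/(3-τ) * (N:ℝ) ^ ((3-τ)*abar)) := by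
          rw [Finset.sum_const, Finset.card_univ, Fintype.card_fin, nsmul_eq_mul]
      _ = (τ-1)/(3-τ) * (N:ℝ) ^ (1 + (3-τ)*abar) := by
          rw [Real.rpow_add hN0, Real.rpow_one]
          ring
  -- Chebyshev
  have hcheb := meas_ge_le_variance_div_sq (μ := μ) hSmem (show (0:ℝ) < m/2 by positivity)
  have hmlb : E/2 * (N:ℝ) ^ (1 - (τ-2)*abar) ≤ m/2 := by
    rw [hm]
    have h : (N:ℝ) ^ (1 - (τ-2)*abar) ≤ (N:ℝ) ^ (1 - (τ-2)*α₀ N) :=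
      Real.rpow_le_rpow_of_exponent_le hN1
        (by linarith [mul_le_mul_of_nonneg_left hα₀a.le hτ20.le])
    calc E/2 * (N:ℝ) ^ (1 - (τ-2)*abar) ≤ E/2 * (N:ℝ) ^ (1 - (τ-2)*α₀ N) :=
        mul_le_mul_of_nonneg_left h (by positivity)
      _ = (N:ℝ) ^ (1 - (τ-2)*α₀ N) * E / 2 := by ring
  have hlbpos : (0:ℝ) < E/2 * (N:ℝ) ^ (1 - (τ-2)*abar) := by positivity
  have hdivle : variance S μ / (m/2)^2
      ≤ ((τ-1)/(3-τ) * (N:ℝ) ^ (1 + (3-τ)*abar)) / (E/2 * (N:ℝ) ^ (1 - (τ-2)*abar))^2 := by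
    apply div_le_div₀ (by positivity) hvarS' (by positivity)
    exact pow_le_pow_left₀ hlbpos.le hmlb 2
  have heq : ((τ-1)/(3-τ) * (N:ℝ) ^ (1 + (3-τ)*abar)) / (E/2 * (N:ℝ) ^ (1 - (τ-2)*abar))^2
      = C₁ * (N:ℝ) ^ (-(1 - (τ-1)*abar)) := by
    rw [hC₁, mul_pow, sq ((N:ℝ) ^ (1 - (τ-2)*abar)), ← Real.rpow_add hN0]
    have hu : (N:ℝ) ^ (1 + (3-τ)*abar)
        = (N:ℝ) ^ (-(1 - (τ-1)*abar)) * (N:ℝ) ^ ((1-(τ-2)*abar) + (1-(τ-2)*abar)) := by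
      rw [← Real.rpow_add hN0]; congr 1; ring
    rw [hu]
    have h0 : ((N:ℝ) ^ ((1-(τ-2)*abar) + (1-(τ-2)*abar))) ≠ 0 :=
      (Real.rpow_pos_of_pos hN0 _).ne'
    have hE20 : ((E/2)^2 : ℝ) ≠ 0 := by positivity
    field_simp
  have hfinal_real : variance S μ / (m/2)^2
      ≤ 2 * ((E/2) ^ (-(τ-1)) * (N:ℝ) ^ (-((1 - (τ-1)*abar) * (τ-2)))) := by
    refine le_trans hdivle (le_trans (le_of_eq heq) ?_)
    have h1 : C₁ ≤ C₂ * (N:ℝ) ^ ((1-(τ-1)*abar)*(3-τ)) := by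
      have h := (div_le_iff₀ hC₂pos).mp hNrpow
      linarith [h]
    calc C₁ * (N:ℝ) ^ (-(1-(τ-1)*abar))
        ≤ (C₂ * (N:ℝ) ^ ((1-(τ-1)*abar)*(3-τ))) * (N:ℝ) ^ (-(1-(τ-1)*abar)) :=
          mul_le_mul_of_nonneg_right h1 (Real.rpow_nonneg hN0.le _)
      _ = C₂ * (N:ℝ) ^ (-((1-(τ-1)*abar)*(τ-2))) := by
          rw [mul_assoc, ← Real.rpow_add hN0,
            show (1-(τ-1)*abar)*(3-τ) + (-(1-(τ-1)*abar)) = -((1-(τ-1)*abar)*(τ-2)) from by ring]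
      _ = 2 * ((E/2) ^ (-(τ-1)) * (N:ℝ) ^ (-((1 - (τ-1)*abar) * (τ-2)))) := by
          rw [hC₂]; ring
  -- event inclusion
  have hmeasev : MeasurableSet {ω | m/2 ≤ |S ω - μ[S]|} :=
    measurableSet_le measurable_const ((hSmeas.sub measurable_const).abs)
  have hsub : {ω | m/2 ≤ |S ω - μ[S]|}ᶜ ⊆
      {ω | (∑ i, (Set.Ioc a b).indicator id (Λ N i ω)) / m ∈ Set.Ioo (1/5 : ℝ) 5} := by
    intro ω hω
    simp only [Set.mem_compl_iff, Set.mem_setOf_eq, not_le] at hω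
    obtain ⟨hlo, hhi⟩ := abs_lt.mp hω
    have hSω : ∑ i, (Set.Ioc a b).indicator id (Λ N i ω) = S ω := (hSapp ω).symm
    simp only [Set.mem_setOf_eq, hSω, Set.mem_Ioo]
    constructor
    · rw [lt_div_iff₀ hmpos]
      linarith [hESlb, hmpos]
    · rw [div_lt_iff₀ hmpos]
      linarith [hESub, hmpos]
  calc 1 - 2 * ENNReal.ofReal ((E/2) ^ (-(τ-1)) * (N:ℝ) ^ (-((1 - (τ-1)*abar) * (τ-2))))
      ≤ 1 - ENNReal.ofReal (variance S μ / (m/2)^2) := by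
        apply tsub_le_tsub_left
        rw [show (2:ℝ≥0∞) = ENNReal.ofReal (2:ℝ) from by norm_num,
          ← ENNReal.ofReal_mul (by norm_num)]
        exact ENNReal.ofReal_le_ofReal hfinal_real
    _ ≤ 1 - μ {ω | m/2 ≤ |S ω - μ[S]|} := tsub_le_tsub_left hcheb 1
    _ = μ ({ω | m/2 ≤ |S ω - μ[S]|}ᶜ) := (prob_compl_eq_one_sub hmeasev).symm
    _ ≤ _ := measure_mono hsub
end
end

section
/- For any fixed b > 1, the ratio ( Σ_{i=1}^N Λ_i·1{Λ_i > N^{b·ε(N)}} ) / ( Σ_{i=1}^N Λ_i·1{Λ_i > N^{ε(N)}} ) converges to 0 in probability as N → ∞. -/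
open MeasureTheory ProbabilityTheory Filter Set

noncomputable section

/-! ### Auxiliary lemmas -/

lemma trunc_lintegral {Ω : Type} [MeasurableSpace Ω] (μ : Measure Ω) [IsProbabilityMeasure μ]
    (τ A : ℝ) (hτ2 : 2 < τ) (X : Ω → ℝ) (hm : Measurable X)
    (htail : ∀ x : ℝ, 1 ≤ x → μ {ω | x < X ω} = ENNReal.ofReal (x ^ (-(τ-1)))) (hA : 1 ≤ A) :
    ∫⁻ ω, ENNReal.ofReal (if A < X ω then X ω else 0) ∂μ
      = ENNReal.ofReal ((τ-1)/(τ-2) * A ^ (2-τ)) := by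
  have hA0 : (0:ℝ) < A := lt_of_lt_of_le one_pos hA
  have hτ2' : τ - 2 ≠ 0 := by linarith
  have hτ2'' : (2:ℝ) - τ ≠ 0 := by linarith
  set Y : Ω → ℝ := fun ω => if A < X ω then X ω else 0 with hY
  have hYm : Measurable Y := Measurable.ite (hm measurableSet_Ioi) hm measurable_const
  have hYnn : ∀ ω, 0 ≤ Y ω := by
    intro ω; simp only [hY]; split
    · linarith [hA0, ‹A < X ω›]
    · exact le_rfl
  rw [lintegral_eq_lintegral_meas_lt μ (f := fun ω => if A < X ω then X ω else 0)
    (ae_of_all _ hYnn) hYm.aemeasurable]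
  rw [← Set.Ioc_union_Ioi_eq_Ioi hA0.le,
    lintegral_union measurableSet_Ioi Set.Ioc_disjoint_Ioi_same]
  have hset1 : ∀ t ∈ Set.Ioc (0:ℝ) A, μ {a | t < Y a} = ENNReal.ofReal (A ^ (-(τ-1))) := by
    intro t ht
    have : {a | t < Y a} = {a | A < X a} := by
      ext ω
      show (t < if A < X ω then X ω else 0) ↔ A < X ω
      by_cases hAX : A < X ω
      · rw [if_pos hAX]; exact ⟨fun _ => hAX, fun _ => lt_of_le_of_lt ht.2 hAX⟩
      · rw [if_neg hAX]
        constructor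
        · intro h; exact absurd (ht.1.trans h) (lt_irrefl 0)
        · intro h; exact absurd h hAX
    rw [this, htail A hA]
  have hset2 : ∀ t ∈ Set.Ioi A, μ {a | t < Y a} = ENNReal.ofReal (t ^ (-(τ-1))) := by
    intro t (ht : A < t)
    have : {a | t < Y a} = {a | t < X a} := by
      ext ω
      show (t < if A < X ω then X ω else 0) ↔ t < X ω
      by_cases hAX : A < X ω
      · rw [if_pos hAX]
      · rw [if_neg hAX]
        constructor
        · intro h; linarith [hA0, ht]
        · intro h; exact absurd (ht.trans h) hAX
    rw [this, htail t (hA.trans ht.le)]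
  have h1 : ∫⁻ t in Set.Ioc 0 A, μ {a | t < Y a}
      = ENNReal.ofReal (A ^ (-(τ-1))) * ENNReal.ofReal A := by
    rw [setLIntegral_congr_fun measurableSet_Ioc hset1,
      setLIntegral_const, Real.volume_Ioc, sub_zero]
  have h2 : ∫⁻ t in Set.Ioi A, μ {a | t < Y a} = ENNReal.ofReal (A ^ (2-τ) / (τ-2)) := by
    rw [setLIntegral_congr_fun measurableSet_Ioi hset2]
    rw [← MeasureTheory.ofReal_integral_eq_lintegral_ofReal
      (integrableOn_Ioi_rpow_of_lt (by linarith : -(τ-1) < -1) hA0)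
      ((ae_restrict_iff' measurableSet_Ioi).2 (ae_of_all _ (fun t (ht : A < t) =>
        Real.rpow_nonneg (by linarith) _)))]
    rw [integral_Ioi_rpow_of_lt (by linarith : -(τ-1) < -1) hA0]
    congr 1
    rw [show -(τ-1) + 1 = 2 - τ by ring]
    field_simp
    ring
  rw [h1, h2, ← ENNReal.ofReal_mul (Real.rpow_nonneg hA0.le _), ← ENNReal.ofReal_add
    (mul_nonneg (Real.rpow_nonneg hA0.le _) hA0.le)
    (div_nonneg (Real.rpow_nonneg hA0.le _) (by linarith))]
  congr 1
  have : A ^ (-(τ-1)) * A = A ^ (2-τ) := by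
    rw [← Real.rpow_add_one hA0.ne']; congr 1; ring
  rw [this]
  field_simp
  ring

lemma count_lower {Ω : Type} [MeasurableSpace Ω] (μ : Measure Ω) [IsProbabilityMeasure μ]
    (N : ℕ) (hN : 1 ≤ N) (Λ : Fin N → Ω → ℝ) (hmeas : ∀ i, Measurable (Λ i))
    (hindep : iIndepFun Λ μ)
    (a p : ℝ) (hp0 : 0 < p)
    (htail : ∀ i, μ {ω | a < Λ i ω} = ENNReal.ofReal p) :
    μ {ω | (∑ i, if a < Λ i ω then (1:ℝ) else 0) < N*p/2} ≤ ENNReal.ofReal (4/(N*p)) := by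
  have hNp : (0:ℝ) < N * p := by
    have : (1:ℝ) ≤ N := by exact_mod_cast hN
    nlinarith
  set g : ℝ → ℝ := fun y => if a < y then 1 else 0 with hg
  have gm : Measurable g := Measurable.ite measurableSet_Ioi measurable_const measurable_const
  set χ : Fin N → Ω → ℝ := fun i => g ∘ Λ i with hχ
  have hχm : ∀ i, Measurable (χ i) := fun i => gm.comp (hmeas i)
  have hms : ∀ i, MeasurableSet {ω | a < Λ i ω} := by
    intro i
    have : {ω | a < Λ i ω} = Λ i ⁻¹' (Set.Ioi a) := rfl
    rw [this]; exact hmeas i measurableSet_Ioi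
  have hχind : ∀ i, χ i = Set.indicator {ω | a < Λ i ω} (fun _ => (1:ℝ)) := by
    intro i; funext ω
    simp only [hχ, hg, Function.comp_apply, Set.indicator_apply, Set.mem_setOf_eq]
  have hEχ : ∀ i, ∫ ω, χ i ω ∂μ = p := by
    intro i
    rw [show (fun ω => χ i ω) = χ i from rfl, hχind i, integral_indicator_const _ (hms i),
      measureReal_def, htail i, ENNReal.toReal_ofReal hp0.le, smul_eq_mul, mul_one]
  have hℒ2 : ∀ i, MemLp (χ i) 2 μ := by
    intro i
    refine MemLp.of_bound ((hχm i).aestronglyMeasurable) 1 (ae_of_all _ fun ω => ?_)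
    simp only [hχ, hg, Function.comp_apply]
    split <;> simp
  have hχsq : ∀ i, (χ i) ^ 2 = χ i := by
    intro i; funext ω
    simp only [Pi.pow_apply, hχ, hg, Function.comp_apply]
    split <;> norm_num
  have hVarχ : ∀ i, variance (χ i) μ ≤ p := by
    intro i
    rw [variance_eq_sub (hℒ2 i), hχsq i, hEχ i]
    nlinarith [sq_nonneg p, hEχ i]
  set X : Ω → ℝ := ∑ i, χ i with hX
  have hXℒ2 : MemLp X 2 μ := memLp_finset_sum' _ (fun i _ => hℒ2 i)
  have hEX : ∫ ω, X ω ∂μ = N * p := by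
    calc ∫ ω, X ω ∂μ = ∫ ω, ∑ i, χ i ω ∂μ := by
          refine integral_congr_ae (ae_of_all _ fun ω => ?_)
          rw [hX, Finset.sum_apply]
    _ = ∑ i, ∫ ω, χ i ω ∂μ := integral_finset_sum _ (fun i _ => (hℒ2 i).integrable one_le_two)
    _ = N * p := by simp [hEχ, mul_comm]
  have hVarX : variance X μ ≤ N * p := by
    rw [hX, IndepFun.variance_sum (fun i _ => hℒ2 i)
      (fun i _ j _ hij => ((hindep.indepFun hij).comp gm gm))]
    calc (∑ i, variance (χ i) μ) ≤ ∑ _i : Fin N, p := Finset.sum_le_sum fun i _ => hVarχ i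
    _ = N * p := by simp [mul_comm]
  have hcheb := meas_ge_le_variance_div_sq (μ := μ) hXℒ2 (c := N*p/2) (by linarith)
  have hsub : {ω | (∑ i, if a < Λ i ω then (1:ℝ) else 0) < N*p/2}
      ⊆ {ω | N*p/2 ≤ |X ω - μ[X]|} := by
    intro ω hω
    simp only [Set.mem_setOf_eq] at hω ⊢
    have hXω : X ω = ∑ i, if a < Λ i ω then (1:ℝ) else 0 := by
      rw [hX, Finset.sum_apply]
      exact Finset.sum_congr rfl (fun i _ => rfl)
    rw [hEX, hXω]
    rw [abs_sub_comm]
    calc N*p/2 = N*p - N*p/2 := by ring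
    _ ≤ N*p - (∑ i, if a < Λ i ω then (1:ℝ) else 0) := by linarith
    _ ≤ |N*p - (∑ i, if a < Λ i ω then (1:ℝ) else 0)| := le_abs_self _
  refine le_trans (measure_mono hsub) (le_trans hcheb (ENNReal.ofReal_le_ofReal ?_))
  rw [div_le_div_iff₀ (by positivity) hNp]
  calc variance X μ * (N*p) ≤ (N*p) * (N*p) := by
        nlinarith [hVarX, hNp, variance_nonneg X μ]
  _ ≤ 4 * (N*p/2)^2 := by nlinarith

lemma log_nat_atTop : Tendsto (fun N : ℕ => Real.log N) atTop atTop :=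
  Real.tendsto_log_atTop.comp tendsto_natCast_atTop_atTop

lemma ell_ge_one (ℓ : ℕ → ℝ) (hℓ : IsAdmissibleEll ℓ) : ∀ N : ℕ, 1 ≤ N → 1 ≤ ℓ N := by
  intro N hN
  have := hℓ.1.monotone hN
  rw [hℓ.2.1] at this
  exact this

lemma ell_atTop (ℓ : ℕ → ℝ) (hℓ : IsAdmissibleEll ℓ) : Tendsto ℓ atTop atTop := by
  have hL4 : Tendsto (fun N : ℕ => Real.log (Real.log (Real.log (Real.log N)))) atTop atTop :=
    Real.tendsto_log_atTop.comp (Real.tendsto_log_atTop.comp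
      (Real.tendsto_log_atTop.comp log_nat_atTop))
  refine tendsto_atTop_mono' _ ?_ hℓ.2.2.2
  filter_upwards [hL4.eventually_ge_atTop 1, eventually_ge_atTop 1] with N h1 hN1
  exact div_le_self (by linarith [ell_ge_one ℓ hℓ N hN1]) h1

lemma ell_div_log (ℓ : ℕ → ℝ) (hℓ : IsAdmissibleEll ℓ) :
    Tendsto (fun N : ℕ => ℓ N / Real.log N) atTop (nhds 0) := by
  have hL2 : Tendsto (fun N : ℕ => Real.log (Real.log N)) atTop atTop :=
    Real.tendsto_log_atTop.comp log_nat_atTop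
  have hL3 : Tendsto (fun N : ℕ => Real.log (Real.log (Real.log N))) atTop atTop :=
    Real.tendsto_log_atTop.comp hL2
  have hub : Tendsto (fun N : ℕ => Real.log (Real.log N) / Real.log N) atTop (nhds 0) := by
    have h0 : Tendsto (fun y : ℝ => Real.log y / y) atTop (nhds 0) := by
      simpa using Real.isLittleO_log_id_atTop.tendsto_div_nhds_zero
    exact h0.comp log_nat_atTop
  have hL3log : Tendsto (fun N : ℕ => Real.log (Real.log (Real.log N)) / Real.log N)
      atTop (nhds 0) := by
    refine tendsto_of_tendsto_of_tendsto_of_le_of_le' tendsto_const_nhds hub ?_ ?_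
    · filter_upwards [hL3.eventually_ge_atTop 0, log_nat_atTop.eventually_ge_atTop 1]
        with N h3 hlog
      exact div_nonneg h3 (by linarith)
    · filter_upwards [hL2.eventually_ge_atTop 1, log_nat_atTop.eventually_ge_atTop 1]
        with N h2 hlog
      exact (div_le_div_iff_of_pos_right (by linarith)).2 (Real.log_le_self (by linarith))
  have hmul := hℓ.2.2.1.mul hL3log
  rw [mul_zero] at hmul
  refine hmul.congr' ?_
  filter_upwards [hL3.eventually_ge_atTop 1] with N h3
  rw [div_mul_div_comm, mul_comm (ℓ N),
    mul_div_mul_left _ _ (by linarith : Real.log (Real.log (Real.log N)) ≠ 0)]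

lemma log_sub_ell_atTop (ℓ : ℕ → ℝ) (hℓ : IsAdmissibleEll ℓ) (c : ℝ) (hc : 0 < c) :
    Tendsto (fun N : ℕ => Real.log N - c * ℓ N) atTop atTop := by
  have h2 : Tendsto (fun N : ℕ => (1/2) * Real.log N) atTop atTop :=
    log_nat_atTop.const_mul_atTop (by norm_num)
  refine tendsto_atTop_mono' _ ?_ h2
  filter_upwards [(ell_div_log ℓ hℓ).eventually_le_const
      (show (0:ℝ) < 1/(2*c) by positivity), log_nat_atTop.eventually_ge_atTop 1,
      eventually_ge_atTop 1] with N hr hlog hN1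
  have hℓN : ℓ N ≤ Real.log N / (2*c) := by
    rw [div_le_iff₀ (by linarith)] at hr
    calc ℓ N ≤ 1/(2*c) * Real.log N := hr
    _ = Real.log N / (2*c) := by ring
  have : c * ℓ N ≤ Real.log N / 2 := by
    calc c * ℓ N ≤ c * (Real.log N / (2*c)) := by nlinarith
    _ = Real.log N / 2 := by field_simp
  linarith

/-- Lemma 3.3 of Norros–Reittu. For any fixed `b > 1`, the
aggregated capacity above level `N^{bε(N)}` is negligible compared with the
aggregated capacity above level `N^{ε(N)}`: their ratio tends to `0` in probability. -/
theorem low_tier_dominates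
    (τ : ℝ) (hτ : τ ∈ Set.Ioo (2 : ℝ) 3)
    (Ω : Type) [MeasurableSpace Ω] (μ : Measure Ω) [IsProbabilityMeasure μ]
    (Λ : (N : ℕ) → Fin N → Ω → ℝ)
    (hΛ_meas : ∀ N i, Measurable (Λ N i))
    (hΛ_ge_one : ∀ N i ω, 1 ≤ Λ N i ω)
    (hΛ_indep : ∀ N, iIndepFun (Λ N) μ)
    (hΛ_pareto : ∀ (N : ℕ) (i : Fin N) (x : ℝ), 1 ≤ x →
      μ {ω | x < Λ N i ω} = ENNReal.ofReal (x ^ (-(τ - 1))))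
    (ℓ : ℕ → ℝ) (hℓ : IsAdmissibleEll ℓ)
    (b : ℝ) (hb : 1 < b) :
    ∀ δ : ℝ, 0 < δ →
      Tendsto (fun N : ℕ =>
          μ {ω | δ ≤
            (∑ i, Set.indicator {x : ℝ | (N : ℝ) ^ (b * epsFun ℓ N) < x} id (Λ N i ω)) /
              (∑ i, Set.indicator {x : ℝ | (N : ℝ) ^ epsFun ℓ N < x} id (Λ N i ω))})
        atTop (nhds 0) := by
  obtain ⟨hτ2, hτ3⟩ := hτ
  intro δ hδ
  have hτ2' : (0:ℝ) < τ - 2 := by linarith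
  set C : ℝ := (τ-1)/(τ-2) with hC
  have hC0 : 0 < C := div_pos (by linarith) hτ2'
  set g : ℕ → ENNReal := fun N => ENNReal.ofReal (4 * Real.exp (-(Real.log N - (τ-1) * ℓ N)))
      + ENNReal.ofReal (2*C/δ * Real.exp (-((τ-2)*(b-1) * ℓ N))) with hgdef
  have hg0 : Tendsto g atTop (nhds 0) := by
    have t1 : Tendsto (fun N : ℕ => 4 * Real.exp (-(Real.log N - (τ-1)*ℓ N)))
        atTop (nhds 0) := by
      have h := Real.tendsto_exp_atBot.comp
        (tendsto_neg_atTop_atBot.comp (log_sub_ell_atTop ℓ hℓ (τ-1) (by linarith)))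
      simpa [Function.comp] using h.const_mul (4:ℝ)
    have t2 : Tendsto (fun N : ℕ => 2*C/δ * Real.exp (-((τ-2)*(b-1) * ℓ N)))
        atTop (nhds 0) := by
      have h := Real.tendsto_exp_atBot.comp
        (tendsto_neg_atTop_atBot.comp ((ell_atTop ℓ hℓ).const_mul_atTop
          (by nlinarith : (0:ℝ) < (τ-2)*(b-1))))
      simpa [Function.comp] using h.const_mul (2*C/δ)
    have := (ENNReal.tendsto_ofReal t1).add (ENNReal.tendsto_ofReal t2)
    simpa [hgdef] using this
  have hbound : ∀ᶠ N : ℕ in atTop, μ {ω | δ ≤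
      (∑ i, Set.indicator {x : ℝ | (N : ℝ) ^ (b * epsFun ℓ N) < x} id (Λ N i ω)) /
        (∑ i, Set.indicator {x : ℝ | (N : ℝ) ^ epsFun ℓ N < x} id (Λ N i ω))} ≤ g N := by
    filter_upwards [eventually_ge_atTop 2] with N hN2
    have hN1 : 1 ≤ N := le_trans one_le_two hN2
    have hNpos : (0:ℝ) < N := by exact_mod_cast Nat.lt_of_lt_of_le Nat.zero_lt_one hN1
    have hN1R : (1:ℝ) < N := by exact_mod_cast hN2
    have hl : 0 < Real.log N := Real.log_pos hN1R
    set y := ℓ N with hy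
    have hy1 : 1 ≤ y := ell_ge_one ℓ hℓ N hN1
    set a := (N:ℝ) ^ (epsFun ℓ N) with hadef
    set A := (N:ℝ) ^ (b * epsFun ℓ N) with hAdef
    have ha : a = Real.exp y := by
      rw [hadef, Real.rpow_def_of_pos hNpos]
      congr 1
      unfold epsFun
      rw [mul_comm, div_mul_cancel₀ _ hl.ne']
    have hA : A = Real.exp (b*y) := by
      rw [hAdef, Real.rpow_def_of_pos hNpos]
      congr 1
      unfold epsFun
      field_simp
      exact hy.symm
    have ha1 : 1 ≤ a := by rw [ha]; exact Real.one_le_exp (by linarith)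
    have hA1 : 1 ≤ A := by rw [hA]; exact Real.one_le_exp (by nlinarith)
    set p := Real.exp (-((τ-1)*y)) with hp
    have hp0 : 0 < p := Real.exp_pos _
    have hNp : (0:ℝ) < N * p := by positivity
    have htail_a : ∀ i : Fin N, μ {ω | a < Λ N i ω} = ENNReal.ofReal p := by
      intro i
      rw [hΛ_pareto N i a ha1]
      congr 1
      rw [ha, ← Real.exp_mul]
      congr 1; ring
    set t := Real.exp y * ((N:ℝ)*p/2) with ht
    have ht0 : 0 < t := by positivity
    -- the count bound
    have hcount := count_lower μ N hN1 (Λ N) (hΛ_meas N) (hΛ_indep N) a p hp0 htail_a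
    -- the Markov bound
    set T : Ω → ℝ := fun ω => ∑ i, (if A < Λ N i ω then Λ N i ω else 0) with hT
    have hTnn : ∀ ω, 0 ≤ T ω := by
      intro ω
      refine Finset.sum_nonneg fun i _ => ?_
      split
      · linarith [hΛ_ge_one N i ω]
      · exact le_rfl
    have hTm : Measurable T := by
      refine Finset.measurable_sum _ fun i _ => ?_
      have hms : MeasurableSet {ω | A < Λ N i ω} := by
        have : {ω | A < Λ N i ω} = Λ N i ⁻¹' (Set.Ioi A) := rfl
        rw [this]; exact hΛ_meas N i measurableSet_Ioi
      exact Measurable.ite hms (hΛ_meas N i) measurable_const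
    have hint : ∫⁻ ω, ENNReal.ofReal (T ω) ∂μ
        = (N:ENNReal) * ENNReal.ofReal (C * A^(2-τ)) := by
      calc ∫⁻ ω, ENNReal.ofReal (T ω) ∂μ
          = ∫⁻ ω, ∑ i, ENNReal.ofReal (if A < Λ N i ω then Λ N i ω else 0) ∂μ := by
            refine lintegral_congr fun ω => ?_
            refine ENNReal.ofReal_sum_of_nonneg fun i _ => ?_
            split
            · linarith [hΛ_ge_one N i ω]
            · exact le_rfl
        _ = ∑ i, ∫⁻ ω, ENNReal.ofReal (if A < Λ N i ω then Λ N i ω else 0) ∂μ := by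
            refine lintegral_finset_sum _ fun i _ => ?_
            have hms : MeasurableSet {ω | A < Λ N i ω} := by
              have : {ω | A < Λ N i ω} = Λ N i ⁻¹' (Set.Ioi A) := rfl
              rw [this]; exact hΛ_meas N i measurableSet_Ioi
            exact (Measurable.ite hms (hΛ_meas N i) measurable_const).ennreal_ofReal
        _ = ∑ _i : Fin N, ENNReal.ofReal (C * A^(2-τ)) := by
            refine Finset.sum_congr rfl fun i _ => ?_
            exact trunc_lintegral μ τ A hτ2 (Λ N i) (hΛ_meas N i)
              (fun x hx => hΛ_pareto N i x hx) hA1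
        _ = (N:ENNReal) * ENNReal.ofReal (C * A^(2-τ)) := by
            simp [Finset.sum_const, nsmul_eq_mul]
    have key : (N:ℝ) * (C * A^(2-τ)) / (δ * t)
        = 2*C/δ * Real.exp (-((τ-2)*(b-1)*y)) := by
      have hA2 : A^(2-τ) = Real.exp (b*y*(2-τ)) := by rw [hA, ← Real.exp_mul]
      rw [hA2, ht, hp, show (N:ℝ) = Real.exp (Real.log N) from (Real.exp_log hNpos).symm]
      rw [show Real.exp (Real.log (N:ℝ)) * (C * Real.exp (b*y*(2-τ)))
            = C * Real.exp (Real.log (N:ℝ) + b*y*(2-τ)) by rw [Real.exp_add]; ring]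
      rw [show δ * (Real.exp y * (Real.exp (Real.log (N:ℝ)) * Real.exp (-((τ-1)*y)) / 2))
            = (δ/2) * Real.exp (y + Real.log (N:ℝ) + -((τ-1)*y)) by
          rw [Real.exp_add, Real.exp_add]; ring]
      rw [div_eq_iff (by positivity)]
      rw [show 2*C/δ * Real.exp (-((τ-2)*(b-1)*y))
            * ((δ/2) * Real.exp (y + Real.log (N:ℝ) + -((τ-1)*y)))
          = C * (Real.exp (-((τ-2)*(b-1)*y)) * Real.exp (y + Real.log (N:ℝ) + -((τ-1)*y))) by
          field_simp]
      rw [← Real.exp_add]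
      congr 1
      ring
    have hMarkov : μ {ω | ENNReal.ofReal (δ*t) ≤ ENNReal.ofReal (T ω)}
        ≤ ENNReal.ofReal (2*C/δ * Real.exp (-((τ-2)*(b-1) * y))) := by
      have h1 := meas_ge_le_lintegral_div (μ := μ) (f := fun ω => ENNReal.ofReal (T ω))
        hTm.ennreal_ofReal.aemeasurable (ε := ENNReal.ofReal (δ*t))
        (ne_of_gt (ENNReal.ofReal_pos.2 (by positivity))) ENNReal.ofReal_ne_top
      refine le_trans h1 ?_
      rw [hint, show (N:ENNReal) = ENNReal.ofReal (N:ℝ) from (ENNReal.ofReal_natCast N).symm,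
        ← ENNReal.ofReal_mul (Nat.cast_nonneg N),
        ← ENNReal.ofReal_div_of_pos (by positivity : (0:ℝ) < δ*t), key]
    -- inclusion of events
    have hincl : {ω | δ ≤
        (∑ i, Set.indicator {x : ℝ | A < x} id (Λ N i ω)) /
          (∑ i, Set.indicator {x : ℝ | a < x} id (Λ N i ω))}
        ⊆ {ω | (∑ i, if a < Λ N i ω then (1:ℝ) else 0) < (N:ℝ)*p/2}
          ∪ {ω | ENNReal.ofReal (δ*t) ≤ ENNReal.ofReal (T ω)} := by
      intro ω hω
      simp only [Set.mem_setOf_eq] at hω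
      by_cases hc : (∑ i, if a < Λ N i ω then (1:ℝ) else 0) < (N:ℝ)*p/2
      · exact Or.inl hc
      · push_neg at hc
        refine Or.inr ?_
        show ENNReal.ofReal (δ*t) ≤ ENNReal.ofReal (T ω)
        refine ENNReal.ofReal_le_ofReal ?_
        set S := ∑ i, Set.indicator {x : ℝ | a < x} id (Λ N i ω) with hS
        have hSc : Real.exp y * (∑ i, if a < Λ N i ω then (1:ℝ) else 0) ≤ S := by
          rw [hS, Finset.mul_sum]
          refine Finset.sum_le_sum fun i _ => ?_
          by_cases h : a < Λ N i ω
          · rw [if_pos h, mul_one, Set.indicator_apply]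
            rw [if_pos (show Λ N i ω ∈ {x : ℝ | a < x} from h)]
            show Real.exp y ≤ Λ N i ω
            rw [← ha]; exact h.le
          · rw [if_neg h, mul_zero, Set.indicator_apply]
            rw [if_neg (show Λ N i ω ∉ {x : ℝ | a < x} from h)]
        have htS : t ≤ S := by
          refine le_trans ?_ hSc
          rw [ht]
          exact mul_le_mul_of_nonneg_left hc (Real.exp_pos y).le
        have hSpos : 0 < S := lt_of_lt_of_le ht0 htS
        have hδS : δ * S ≤ ∑ i, Set.indicator {x : ℝ | A < x} id (Λ N i ω) :=
          (le_div_iff₀ hSpos).1 hω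
        have hTind : (∑ i, Set.indicator {x : ℝ | A < x} id (Λ N i ω)) = T ω := by
          refine Finset.sum_congr rfl fun i _ => ?_
          simp [Set.indicator_apply, Set.mem_setOf_eq]
        calc δ * t ≤ δ * S := by nlinarith
        _ ≤ ∑ i, Set.indicator {x : ℝ | A < x} id (Λ N i ω) := hδS
        _ = T ω := hTind
    calc μ {ω | δ ≤
        (∑ i, Set.indicator {x : ℝ | A < x} id (Λ N i ω)) /
          (∑ i, Set.indicator {x : ℝ | a < x} id (Λ N i ω))}
        ≤ μ ({ω | (∑ i, if a < Λ N i ω then (1:ℝ) else 0) < (N:ℝ)*p/2}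
          ∪ {ω | ENNReal.ofReal (δ*t) ≤ ENNReal.ofReal (T ω)}) := measure_mono hincl
    _ ≤ μ {ω | (∑ i, if a < Λ N i ω then (1:ℝ) else 0) < (N:ℝ)*p/2}
          + μ {ω | ENNReal.ofReal (δ*t) ≤ ENNReal.ofReal (T ω)} := measure_union_le _ _
    _ ≤ ENNReal.ofReal (4/((N:ℝ)*p)) + ENNReal.ofReal (2*C/δ * Real.exp (-((τ-2)*(b-1) * y)))
        := add_le_add hcount hMarkov
    _ = g N := by
        have e1 : (4:ℝ)/((N:ℝ)*p) = 4 * Real.exp (-(Real.log N - (τ-1)*y)) := by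
          rw [hp, show ((N:ℝ)*Real.exp (-((τ-1)*y))) = Real.exp (Real.log N - (τ-1)*y) by
            rw [show (N:ℝ) = Real.exp (Real.log N) from (Real.exp_log hNpos).symm,
              ← Real.exp_add]
            congr 1
            rw [Real.log_exp]
            ring]
          rw [Real.exp_neg, div_eq_mul_inv]
        simp only [hgdef]
        rw [← hy, e1]
  exact tendsto_of_tendsto_of_tendsto_of_le_of_le' tendsto_const_nhds hg0
    (Eventually.of_forall fun N => zero_le) hbound
end
end

section
/- Let α > 0, let N_α be a Binomial(N, N^{−(τ−1)α}) random variable (assuming N^{−(τ−1)α} ≤ 1), and let Λ̃_1, Λ̃_2, … be i.i.d. copies of Λ independent of N_α. Then Σ_{i=1}^N Λ_i·1{Λ_i > N^α} has the same distribution as N^α · Σ_{k=1}^{N_α} Λ̃_k. -/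
open MeasureTheory ProbabilityTheory Filter Set
open scoped ENNReal

noncomputable section

section NRaux

variable {Ω : Type} [MeasurableSpace Ω] {μ : Measure Ω}

/-- Reindexing an independent family along an injective map. -/
lemma NR_iIndepFun_precomp {ι ι' : Type*} (f : ι → Ω → ℝ) (g : ι' → ι)
    (hg : Function.Injective g)
    (h : iIndepFun f μ) :
    iIndepFun (fun i' => f (g i')) μ := by
  classical
  rw [iIndepFun_iff_measure_inter_preimage_eq_mul] at h ⊢
  intro S sets hsets
  have key := h (S.image g)
    (sets := Function.extend g sets fun _ => Set.univ) ?_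
  · have h1 : (⋂ i' ∈ S, f (g i') ⁻¹' sets i')
        = ⋂ i ∈ S.image g, f i ⁻¹' Function.extend g sets (fun _ => Set.univ) i := by
      ext ω
      simp only [Set.mem_iInter, Finset.mem_image]
      constructor
      · rintro hω i ⟨i', hi', rfl⟩
        rw [hg.extend_apply]
        exact hω i' hi'
      · intro hω i' hi'
        have := hω (g i') ⟨i', hi', rfl⟩
        rwa [hg.extend_apply] at this
    have h2 : (∏ i ∈ S.image g, μ (f i ⁻¹' Function.extend g sets (fun _ => Set.univ) i))
        = ∏ i' ∈ S, μ (f (g i') ⁻¹' sets i') := by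
      rw [Finset.prod_image (fun a _ b _ hab => hg hab)]
      exact Finset.prod_congr rfl fun i' _ => by rw [hg.extend_apply]
    rw [h1, key, h2]
  · intro i hi
    rcases Finset.mem_image.mp hi with ⟨i', hi', rfl⟩
    rw [hg.extend_apply]
    exact hsets i' hi'

/-- The joint law of a finite independent family is the product of the marginals. -/
lemma NR_map_tuple_eq_pi {ι : Type*} [Fintype ι] [IsProbabilityMeasure μ]
    (f : ι → Ω → ℝ) (hf : ∀ i, Measurable (f i))
    (h : iIndepFun f μ) :
    μ.map (fun ω i => f i ω) = Measure.pi (fun i => μ.map (f i)) := by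
  haveI : ∀ i, IsProbabilityMeasure (μ.map (f i)) :=
    fun i => Measure.isProbabilityMeasure_map (hf i).aemeasurable
  refine (Measure.pi_eq fun s hs => ?_).symm
  rw [Measure.map_apply (measurable_pi_lambda _ fun i => hf i) (MeasurableSet.univ_pi hs)]
  have h1 : (fun ω i => f i ω) ⁻¹' (Set.pi Set.univ s) = ⋂ i, f i ⁻¹' s i := by
    ext ω; simp [Set.mem_pi]
  rw [h1, h.meas_iInter fun i => ⟨s i, hs i, rfl⟩]
  exact Finset.prod_congr rfl fun i _ =>
    (Measure.map_apply (hf i) (hs i)).symm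

lemma NR_pareto_Iic {t : ℝ} [IsProbabilityMeasure μ]
    (X : Ω → ℝ) (hX : Measurable X) (hge : ∀ ω, 1 ≤ X ω)
    (htail : ∀ x : ℝ, 1 ≤ x → μ {ω | x < X ω} = ENNReal.ofReal (x ^ (-t)))
    (b : ℝ) : μ (X ⁻¹' Iic b) =
      if 1 ≤ b then 1 - ENNReal.ofReal (b ^ (-t)) else 0 := by
  split_ifs with hb
  · have hcompl : X ⁻¹' Iic b = (X ⁻¹' Ioi b)ᶜ := by
      ext ω; simp [not_lt]
    have hIoi : μ (X ⁻¹' Ioi b) = ENNReal.ofReal (b ^ (-t)) := htail b hb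
    rw [hcompl, measure_compl (hX measurableSet_Ioi) (measure_ne_top μ _), hIoi,
      measure_univ]
  · have : X ⁻¹' Iic b = ∅ := by
      ext ω
      simp only [Set.mem_preimage, Set.mem_Iic, Set.mem_empty_iff_false, iff_false, not_le]
      exact lt_of_lt_of_le (lt_of_not_ge hb) (hge ω)
    rw [this, measure_empty]

lemma NR_pareto_law_ext {t : ℝ} [IsProbabilityMeasure μ]
    (X Y : Ω → ℝ) (hX : Measurable X) (hY : Measurable Y)
    (hgeX : ∀ ω, 1 ≤ X ω) (hgeY : ∀ ω, 1 ≤ Y ω)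
    (htailX : ∀ x : ℝ, 1 ≤ x → μ {ω | x < X ω} = ENNReal.ofReal (x ^ (-t)))
    (htailY : ∀ x : ℝ, 1 ≤ x → μ {ω | x < Y ω} = ENNReal.ofReal (x ^ (-t))) :
    μ.map X = μ.map Y := by
  haveI : IsProbabilityMeasure (μ.map X) := Measure.isProbabilityMeasure_map hX.aemeasurable
  haveI : IsProbabilityMeasure (μ.map Y) := Measure.isProbabilityMeasure_map hY.aemeasurable
  refine Measure.ext_of_Iic (μ.map X) (μ.map Y) fun a => ?_
  rw [Measure.map_apply hX measurableSet_Iic, Measure.map_apply hY measurableSet_Iic,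
    NR_pareto_Iic X hX hgeX htailX a, NR_pareto_Iic Y hY hgeY htailY a]

lemma NR_pareto_restrict {t : ℝ} (ht : 0 < t) (ν : Measure ℝ) [IsProbabilityMeasure ν]
    (hIic : ∀ b : ℝ, ν (Iic b) = if 1 ≤ b then 1 - ENNReal.ofReal (b ^ (-t)) else 0)
    (c : ℝ) (hc : 1 ≤ c) :
    ν.restrict (Ioi c) = ENNReal.ofReal (c ^ (-t)) • ν.map (fun x => c * x) := by
  have hc0 : (0:ℝ) < c := lt_of_lt_of_le one_pos hc
  have hrle : ∀ x : ℝ, 1 ≤ x → ENNReal.ofReal (x ^ (-t)) ≤ 1 := by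
    intro x hx
    rw [← ENNReal.ofReal_one]
    exact ENNReal.ofReal_le_ofReal
      (Real.rpow_le_one_of_one_le_of_nonpos hx (by linarith))
  have hIoi : ∀ x : ℝ, 1 ≤ x → ν (Ioi x) = ENNReal.ofReal (x ^ (-t)) := by
    intro x hx
    have : Ioi x = (Iic x)ᶜ := by ext y; simp [not_le]
    rw [this, measure_compl measurableSet_Iic (measure_ne_top ν _), measure_univ,
      hIic x, if_pos hx]
    exact ENNReal.sub_sub_cancel ENNReal.one_ne_top (hrle x hx)
  haveI : IsProbabilityMeasure (ν.map (fun x => c * x)) :=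
    Measure.isProbabilityMeasure_map (measurable_const_mul c).aemeasurable
  refine Measure.ext_of_Iic _ _ fun a => ?_
  rw [Measure.restrict_apply measurableSet_Iic]
  have hpre : (fun x => c * x) ⁻¹' (Iic a) = Iic (a / c) := by
    ext x
    simp only [Set.mem_preimage, Set.mem_Iic]
    rw [mul_comm]
    exact le_div_iff₀ hc0 |>.symm
  rw [Measure.smul_apply, Measure.map_apply (measurable_const_mul c) measurableSet_Iic,
    hpre, smul_eq_mul]
  rcases le_or_gt a c with hac | hac
  · have h1 : Iic a ∩ Ioi c = ∅ := by
      ext x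
      simp only [Set.mem_inter_iff, Set.mem_Iic, Set.mem_Ioi, Set.mem_empty_iff_false,
        iff_false, not_and, not_lt]
      intro hx; linarith
    have h2 : ν (Iic (a / c)) = 0 := by
      rw [hIic]
      split_ifs with h
      · have : a / c = 1 := le_antisymm ((div_le_one hc0).mpr hac) h
        rw [this, Real.one_rpow, ENNReal.ofReal_one, tsub_self]
      · rfl
    rw [h1, measure_empty, h2, mul_zero]
  · have hac1 : (1:ℝ) ≤ a / c := (le_div_iff₀ hc0).mpr (by linarith)
    have ha1 : (1:ℝ) ≤ a := le_trans hc hac.le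
    have h1 : Iic a ∩ Ioi c = Ioi c \ Ioi a := by
      ext x
      simp only [Set.mem_inter_iff, Set.mem_Iic, Set.mem_Ioi, Set.mem_diff, not_lt]
      tauto
    rw [h1, measure_diff (Set.Ioi_subset_Ioi hac.le) measurableSet_Ioi.nullMeasurableSet
      (measure_ne_top ν _), hIoi a ha1, hIoi c hc, hIic _, if_pos hac1]
    rw [ENNReal.mul_sub (fun _ _ => ENNReal.ofReal_ne_top), mul_one,
      ← ENNReal.ofReal_mul (Real.rpow_nonneg hc0.le _)]
    congr 1
    rw [← Real.mul_rpow hc0.le (by positivity), mul_div_cancel₀ _ hc0.ne']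

lemma NR_pi_restrict_const {ι : Type*} [Fintype ι] (m : Measure ℝ) [IsFiniteMeasure m]
    (u : Set ℝ) :
    Measure.pi (fun _ : ι => m.restrict u) =
      (Measure.pi (fun _ : ι => m)).restrict (Set.pi Set.univ fun _ => u) := by
  refine Measure.pi_eq fun s hs => ?_
  rw [Measure.restrict_apply (MeasurableSet.univ_pi hs)]
  have h1 : (Set.pi Set.univ s) ∩ (Set.pi Set.univ fun _ => u)
      = Set.pi Set.univ fun i => s i ∩ u := by
    ext x; simp [Set.mem_pi, forall_and]
  rw [h1, Measure.pi_pi]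
  exact Finset.prod_congr rfl fun i _ => (Measure.restrict_apply (hs i)).symm

lemma NR_pi_eq_smul_pi {ι : Type*} [Fintype ι] (ρ m : Measure ℝ) [IsFiniteMeasure ρ]
    [IsFiniteMeasure m] (r : ℝ≥0∞) (hρ : ∀ s : Set ℝ, MeasurableSet s → ρ s = r * m s) :
    Measure.pi (fun _ : ι => ρ) = r ^ (Fintype.card ι) • Measure.pi (fun _ : ι => m) := by
  refine Measure.pi_eq fun s hs => ?_
  rw [Measure.smul_apply, Measure.pi_pi, smul_eq_mul]
  calc r ^ (Fintype.card ι) * ∏ i, m (s i)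
      = (∏ _i : ι, r) * ∏ i, m (s i) := by rw [Finset.prod_const, Finset.card_univ]
    _ = ∏ i, (r * m (s i)) := by rw [Finset.prod_mul_distrib]
    _ = ∏ i, ρ (s i) := Finset.prod_congr rfl fun i _ => (hρ (s i) (hs i)).symm

/-- Key tail computation on the product space. -/
lemma NR_pi_tail_sum {ι : Type*} [Fintype ι] {t c : ℝ} (ht : 0 < t) (hc : 1 ≤ c)
    (ν₀ : Measure ℝ) [IsProbabilityMeasure ν₀]
    (hIic : ∀ b : ℝ, ν₀ (Iic b) = if 1 ≤ b then 1 - ENNReal.ofReal (b ^ (-t)) else 0)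
    {s : Set ℝ} (hs : MeasurableSet s) :
    Measure.pi (fun _ : ι => ν₀)
        ((Set.pi Set.univ fun _ => Ioi c) ∩ {v : ι → ℝ | (∑ i, v i) ∈ s})
      = (ENNReal.ofReal (c ^ (-t))) ^ (Fintype.card ι) *
        Measure.pi (fun _ : ι => ν₀) {v : ι → ℝ | c * ∑ i, v i ∈ s} := by
  set m : Measure ℝ := ν₀.map (fun x => c * x) with hm
  haveI : IsProbabilityMeasure m :=
    Measure.isProbabilityMeasure_map (measurable_const_mul c).aemeasurable
  set r : ℝ≥0∞ := ENNReal.ofReal (c ^ (-t)) with hr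
  have hrest : ν₀.restrict (Ioi c) = r • m := NR_pareto_restrict ht ν₀ hIic c hc
  have hsum_meas : Measurable fun v : ι → ℝ => ∑ i, v i :=
    Finset.univ.measurable_sum fun i _ => measurable_pi_apply i
  have hA : MeasurableSet {v : ι → ℝ | (∑ i, v i) ∈ s} := hsum_meas hs
  have step1 : Measure.pi (fun _ : ι => ν₀)
        ((Set.pi Set.univ fun _ => Ioi c) ∩ {v : ι → ℝ | (∑ i, v i) ∈ s})
      = Measure.pi (fun _ : ι => ν₀.restrict (Ioi c)) {v : ι → ℝ | (∑ i, v i) ∈ s} := by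
    rw [NR_pi_restrict_const, Measure.restrict_apply hA, Set.inter_comm]
  have step2 : Measure.pi (fun _ : ι => ν₀.restrict (Ioi c))
      = r ^ (Fintype.card ι) • Measure.pi (fun _ : ι => m) := by
    refine NR_pi_eq_smul_pi _ _ r fun u hu => ?_
    rw [hrest, Measure.smul_apply, smul_eq_mul]
  have hmp : MeasurePreserving (fun (v : ι → ℝ) (i : ι) => c * v i)
      (Measure.pi fun _ : ι => ν₀) (Measure.pi fun _ : ι => m) :=
    measurePreserving_pi _ _ (fun i => ⟨measurable_const_mul c, rfl⟩)
  have step3 : Measure.pi (fun _ : ι => m) {v : ι → ℝ | (∑ i, v i) ∈ s}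
      = Measure.pi (fun _ : ι => ν₀) {v : ι → ℝ | c * ∑ i, v i ∈ s} := by
    rw [← hmp.map_eq, Measure.map_apply hmp.measurable hA]
    congr 1
    ext v
    simp only [Set.mem_preimage, Set.mem_setOf_eq, Finset.mul_sum]
  rw [step1, step2, Measure.smul_apply, smul_eq_mul, step3]

/-- Reindexing the sum event along an equivalence of index types. -/
lemma NR_pi_sum_reindex {ι ι' : Type*} [Fintype ι] [Fintype ι'] (e : ι ≃ ι')
    (ν₀ : Measure ℝ) [IsProbabilityMeasure ν₀] {c : ℝ} {s : Set ℝ}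
    (hs : MeasurableSet s) :
    Measure.pi (fun _ : ι' => ν₀) {v : ι' → ℝ | c * ∑ i, v i ∈ s}
      = Measure.pi (fun _ : ι => ν₀) {w : ι → ℝ | c * ∑ i, w i ∈ s} := by
  have hmp := measurePreserving_piCongrLeft (fun _ : ι' => (ν₀ : Measure ℝ)) e
  have hA : MeasurableSet {v : ι' → ℝ | c * ∑ i, v i ∈ s} :=
    ((Finset.univ.measurable_sum fun i _ => measurable_pi_apply i).const_mul c) hs
  rw [← hmp.map_eq, Measure.map_apply hmp.measurable hA]
  congr 1
  ext w
  simp only [Set.mem_preimage, Set.mem_setOf_eq]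
  have hsum : ∑ i' : ι', (MeasurableEquiv.piCongrLeft (fun _ : ι' => ℝ) e) w i'
      = ∑ i : ι, w i := by
    rw [← Equiv.sum_comp e]
    refine Finset.sum_congr rfl fun i _ => ?_
    exact Equiv.piCongrLeft_apply_apply (fun _ : ι' => ℝ) e w i
  rw [hsum]

end NRaux

/-- equation (9) in the proof of Lemma 3.1 of Norros–Reittu.
If `N_α ~ Binomial(N, N^{-(τ-1)α})` and `Λ̃_1, Λ̃_2, …` are fresh i.i.d. Pareto(τ)
copies independent of `N_α`, then `∑_{i=1}^N Λ_i 1{Λ_i > N^α}` is distributed as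
`N^α ∑_{k=1}^{N_α} Λ̃_k`. -/
theorem upper_set_distribution_identity
    (τ : ℝ) (hτ : τ ∈ Set.Ioo (2 : ℝ) 3)
    (N : ℕ) (hN : 0 < N)
    (Ω : Type) [MeasurableSpace Ω] (μ : Measure Ω) [IsProbabilityMeasure μ]
    (Λ : Fin N → Ω → ℝ)
    (hΛ_meas : ∀ i, Measurable (Λ i))
    (hΛ_ge_one : ∀ i ω, 1 ≤ Λ i ω)
    (hΛ_indep : iIndepFun Λ μ)
    (hΛ_pareto : ∀ (i : Fin N) (x : ℝ), 1 ≤ x →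
      μ {ω | x < Λ i ω} = ENNReal.ofReal (x ^ (-(τ - 1))))
    (α : ℝ) (hα : 0 < α)
    (hp_le_one : (N : ℝ) ^ (-((τ - 1) * α)) ≤ 1)
    (Nα : Ω → ℕ) (hNα_meas : Measurable Nα)
    (hNα_binomial : ∀ k : ℕ,
      μ {ω | Nα ω = k} =
        ENNReal.ofReal ((N.choose k : ℝ) * ((N : ℝ) ^ (-((τ - 1) * α))) ^ k *
          (1 - (N : ℝ) ^ (-((τ - 1) * α))) ^ (N - k)))
    (Λt : ℕ → Ω → ℝ)
    (hΛt_meas : ∀ k, Measurable (Λt k))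
    (hΛt_ge_one : ∀ k ω, 1 ≤ Λt k ω)
    (hΛt_indep : iIndepFun Λt μ)
    (hΛt_pareto : ∀ (k : ℕ) (x : ℝ), 1 ≤ x →
      μ {ω | x < Λt k ω} = ENNReal.ofReal (x ^ (-(τ - 1))))
    (h_indep : IndepFun Nα (fun ω (k : ℕ) => Λt k ω) μ) :
    μ.map (fun ω => ∑ i, Set.indicator {x : ℝ | (N : ℝ) ^ α < x} id (Λ i ω)) =
      μ.map (fun ω => (N : ℝ) ^ α * ∑ k ∈ Finset.range (Nα ω), Λt k ω) := by
  classical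
  obtain ⟨hτ2, hτ3⟩ := hτ
  set t : ℝ := τ - 1 with ht_def
  have ht0 : 0 < t := by rw [ht_def]; linarith
  set c : ℝ := (N : ℝ) ^ α with hc_def
  have hN1 : (1:ℝ) ≤ (N:ℝ) := by exact_mod_cast hN
  have hc1 : (1:ℝ) ≤ c := Real.one_le_rpow hN1 hα.le
  have hc0 : (0:ℝ) < c := lt_of_lt_of_le one_pos hc1
  set pr : ℝ := c ^ (-t) with hpr_def
  have hpr_eq : (N : ℝ) ^ (-(t * α)) = pr := by
    rw [hpr_def, hc_def, ← Real.rpow_mul (Nat.cast_nonneg N)]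
    congr 1; ring
  have hpr0 : 0 ≤ pr := Real.rpow_nonneg hc0.le _
  have hpr1 : pr ≤ 1 := Real.rpow_le_one_of_one_le_of_nonpos hc1 (by linarith)
  set r : ℝ≥0∞ := ENNReal.ofReal pr with hr_def
  -- the common Pareto law
  set ν₀ : Measure ℝ := μ.map (Λt 0) with hν₀_def
  haveI : IsProbabilityMeasure ν₀ := Measure.isProbabilityMeasure_map (hΛt_meas 0).aemeasurable
  have hν₀Iic : ∀ b : ℝ, ν₀ (Iic b) =
      if 1 ≤ b then 1 - ENNReal.ofReal (b ^ (-t)) else 0 := by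
    intro b
    rw [hν₀_def, Measure.map_apply (hΛt_meas 0) measurableSet_Iic]
    exact NR_pareto_Iic (Λt 0) (hΛt_meas 0) (hΛt_ge_one 0) (hΛt_pareto 0) b
  have hmapΛ : ∀ i, μ.map (Λ i) = ν₀ := fun i =>
    NR_pareto_law_ext (Λ i) (Λt 0) (hΛ_meas i) (hΛt_meas 0) (hΛ_ge_one i)
      (hΛt_ge_one 0) (hΛ_pareto i) (hΛt_pareto 0)
  have hmapΛt : ∀ k, μ.map (Λt k) = ν₀ := fun k =>
    NR_pareto_law_ext (Λt k) (Λt 0) (hΛt_meas k) (hΛt_meas 0) (hΛt_ge_one k)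
      (hΛt_ge_one 0) (hΛt_pareto k) (hΛt_pareto 0)
  -- measurability of the two functions
  have hG : Measurable (fun ω => ∑ i, Set.indicator {x : ℝ | c < x} id (Λ i ω)) := by
    refine Finset.univ.measurable_sum fun i _ => ?_
    exact (measurable_id.indicator measurableSet_Ioi).comp (hΛ_meas i)
  have hF : Measurable (fun ω => c * ∑ k ∈ Finset.range (Nα ω), Λt k ω) := by
    have h1 : Measurable (fun p : Ω × ℕ => ∑ k ∈ Finset.range p.2, Λt k p.1) := by
      refine measurable_from_prod_countable_left fun n => ?_
      show Measurable fun x : Ω => ∑ k ∈ Finset.range n, Λt k x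
      exact Finset.measurable_sum _ fun k _ => hΛt_meas k
    exact (h1.comp (measurable_id.prodMk hNα_meas)).const_mul c
  refine Measure.ext fun s hs => ?_
  rw [Measure.map_apply hG hs, Measure.map_apply hF hs]
  -- the common mixture amount
  set Q : ℕ → ℝ≥0∞ := fun k =>
    Measure.pi (fun _ : Fin k => ν₀) {w : Fin k → ℝ | c * ∑ j, w j ∈ s} with hQ_def
  have key_lhs : μ ((fun ω => ∑ i, Set.indicator {x : ℝ | c < x} id (Λ i ω)) ⁻¹' s)
      = ∑ k ∈ Finset.range (N + 1),
          (N.choose k : ℝ≥0∞) * (r ^ k * Q k * (1 - r) ^ (N - k)) := by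
    set G : Ω → ℝ := fun ω => ∑ i, Set.indicator {x : ℝ | c < x} id (Λ i ω) with hG_def
    set E : Finset (Fin N) → Set Ω := fun S =>
      {ω | ∀ i : Fin N, if i ∈ S then c < Λ i ω else Λ i ω ≤ c} with hE_def
    have hE_mem : ∀ (S : Finset (Fin N)) ω, ω ∈ E S ↔
        ∀ i : Fin N, if i ∈ S then c < Λ i ω else Λ i ω ≤ c := by
      intro S ω; rw [hE_def]; exact Iff.rfl
    have hE_meas : ∀ S, MeasurableSet (E S) := by
      intro S
      have h1 : E S = ⋂ i : Fin N,
          (if i ∈ S then Λ i ⁻¹' Ioi c else Λ i ⁻¹' Iic c) := by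
        ext ω
        rw [hE_mem, Set.mem_iInter]
        refine forall_congr' fun i => ?_
        split_ifs <;> simp [Set.mem_preimage]
      rw [h1]
      refine MeasurableSet.iInter fun i => ?_
      split_ifs
      · exact hΛ_meas i measurableSet_Ioi
      · exact hΛ_meas i measurableSet_Iic
    have hGsum : ∀ (S : Finset (Fin N)) ω, ω ∈ E S → G ω = ∑ i ∈ S, Λ i ω := by
      intro S ω hω
      rw [hE_mem] at hω
      have h1 : ∀ i : Fin N, Set.indicator {x : ℝ | c < x} id (Λ i ω)
          = if i ∈ S then Λ i ω else 0 := by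
        intro i
        have hi := hω i
        by_cases hiS : i ∈ S
        · rw [if_pos hiS] at hi ⊢
          exact Set.indicator_of_mem hi id
        · rw [if_neg hiS] at hi ⊢
          exact Set.indicator_of_notMem (by simpa using hi) id
      rw [hG_def]
      simp only [h1]
      rw [Finset.sum_ite_mem, Finset.univ_inter]
    have hsum_coe : ∀ (S : Finset (Fin N)) ω, (∑ i : ↥S, Λ (↑i) ω) = ∑ i ∈ S, Λ i ω :=
      fun S ω => Finset.sum_coe_sort S (fun i => Λ i ω)
    have hterm : ∀ S : Finset (Fin N),
        μ (G ⁻¹' s ∩ E S) = r ^ S.card * Q S.card * (1 - r) ^ (N - S.card) := by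
      intro S
      set f1 : Ω → (↥S → ℝ) := fun ω i => Λ (↑i) ω with hf1
      set f2 : Ω → (↥(Sᶜ) → ℝ) := fun ω i => Λ (↑i) ω with hf2
      have hf1m : Measurable f1 := measurable_pi_lambda _ fun i => hΛ_meas (↑i)
      have hf2m : Measurable f2 := measurable_pi_lambda _ fun i => hΛ_meas (↑i)
      set D : Set (↥S → ℝ) :=
        (Set.pi Set.univ fun _ => Ioi c) ∩ {u : ↥S → ℝ | (∑ i, u i) ∈ s} with hD
      set Qc : Set (↥(Sᶜ) → ℝ) := Set.pi Set.univ fun _ => Iic c with hQc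
      have hDm : MeasurableSet D :=
        (MeasurableSet.univ_pi fun _ => measurableSet_Ioi).inter
          ((Finset.univ.measurable_sum fun i _ => measurable_pi_apply i) hs)
      have hQcm : MeasurableSet Qc := MeasurableSet.univ_pi fun _ => measurableSet_Iic
      have hsplit : G ⁻¹' s ∩ E S = f1 ⁻¹' D ∩ f2 ⁻¹' Qc := by
        ext ω
        simp only [Set.mem_inter_iff, Set.mem_preimage]
        constructor
        · rintro ⟨hGs, hES⟩
          have hES' := (hE_mem S ω).mp hES
          have h1 : f1 ω ∈ D := by
            refine ⟨fun i _ => ?_, ?_⟩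
            · have := hES' (↑i)
              rw [if_pos i.2] at this
              exact this
            · show (∑ i : ↥S, Λ (↑i) ω) ∈ s
              rw [hsum_coe, ← hGsum S ω hES]
              exact hGs
          have h2 : f2 ω ∈ Qc := by
            intro i _
            have hi : (↑i : Fin N) ∉ S := Finset.mem_compl.mp i.2
            have := hES' (↑i)
            rw [if_neg hi] at this
            exact this
          exact ⟨h1, h2⟩
        · rintro ⟨h1, h2⟩
          have hES : ω ∈ E S := by
            rw [hE_mem]
            intro i
            by_cases hiS : i ∈ S
            · rw [if_pos hiS]
              exact h1.1 ⟨i, hiS⟩ (Set.mem_univ _)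
            · rw [if_neg hiS]
              exact h2 ⟨i, Finset.mem_compl.mpr hiS⟩ (Set.mem_univ _)
          refine ⟨?_, hES⟩
          show G ω ∈ s
          rw [hGsum S ω hES, ← hsum_coe]
          exact h1.2
      have hindep := hΛ_indep.indepFun_finset S Sᶜ disjoint_compl_right hΛ_meas
      have hprod : μ (f1 ⁻¹' D ∩ f2 ⁻¹' Qc) = μ (f1 ⁻¹' D) * μ (f2 ⁻¹' Qc) :=
        hindep.measure_inter_preimage_eq_mul D Qc hDm hQcm
      have hmap1 : μ.map f1 = Measure.pi (fun _ : ↥S => ν₀) := by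
        rw [hf1, NR_map_tuple_eq_pi (fun i : ↥S => Λ (↑i)) (fun i => hΛ_meas (↑i))
          (NR_iIndepFun_precomp Λ (fun i : ↥S => (↑i : Fin N))
            Subtype.val_injective hΛ_indep)]
        congr 1
        funext i
        exact hmapΛ (↑i)
      have hmap2 : μ.map f2 = Measure.pi (fun _ : ↥(Sᶜ) => ν₀) := by
        rw [hf2, NR_map_tuple_eq_pi (fun i : ↥(Sᶜ) => Λ (↑i)) (fun i => hΛ_meas (↑i))
          (NR_iIndepFun_precomp Λ (fun i : ↥(Sᶜ) => (↑i : Fin N))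
            Subtype.val_injective hΛ_indep)]
        congr 1
        funext i
        exact hmapΛ (↑i)
      have hval1 : μ (f1 ⁻¹' D) = r ^ S.card * Q S.card := by
        rw [← Measure.map_apply hf1m hDm, hmap1, hD,
          NR_pi_tail_sum ht0 hc1 ν₀ hν₀Iic hs, Fintype.card_coe]
        congr 1
        rw [hQ_def]
        exact NR_pi_sum_reindex S.equivFin.symm ν₀ hs
      have hval2 : μ (f2 ⁻¹' Qc) = (1 - r) ^ (N - S.card) := by
        rw [← Measure.map_apply hf2m hQcm, hmap2, hQc, Measure.pi_pi]
        have h1 : ν₀ (Iic c) = 1 - r := by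
          rw [hν₀Iic, if_pos hc1]
        rw [h1, Finset.prod_const, Finset.card_univ, Fintype.card_coe,
          Finset.card_compl, Fintype.card_fin]
      rw [hsplit, hprod, hval1, hval2, mul_assoc]
    have hcover : G ⁻¹' s = ⋃ S ∈ (Finset.univ : Finset (Fin N)).powerset,
        (G ⁻¹' s ∩ E S) := by
      ext ω
      simp only [Set.mem_iUnion, Set.mem_inter_iff, Finset.mem_powerset]
      constructor
      · intro h
        refine ⟨Finset.univ.filter (fun i => c < Λ i ω), Finset.filter_subset _ _,
          h, ?_⟩
        rw [hE_mem]
        intro i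
        by_cases hi : c < Λ i ω
        · rw [if_pos (by simp [hi])]
          exact hi
        · rw [if_neg (by simp [hi])]
          exact not_lt.mp hi
      · rintro ⟨S, _, h, _⟩
        exact h
    have hdisj : (↑(Finset.univ : Finset (Fin N)).powerset :
        Set (Finset (Fin N))).PairwiseDisjoint (fun S => G ⁻¹' s ∩ E S) := by
      intro S _ T _ hST
      refine Set.disjoint_left.mpr fun ω hω hω' => ?_
      obtain ⟨i, hi⟩ := Finset.symmDiff_nonempty.mpr hST
      have hS := (hE_mem S ω).mp hω.2 i
      have hT := (hE_mem T ω).mp hω'.2 i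
      rcases Finset.mem_symmDiff.mp hi with ⟨hiS, hiT⟩ | ⟨hiT, hiS⟩
      · rw [if_pos hiS] at hS
        rw [if_neg hiT] at hT
        exact absurd hS (not_lt.mpr hT)
      · rw [if_pos hiT] at hT
        rw [if_neg hiS] at hS
        exact absurd hT (not_lt.mpr hS)
    calc μ (G ⁻¹' s)
        = ∑ S ∈ (Finset.univ : Finset (Fin N)).powerset, μ (G ⁻¹' s ∩ E S) := by
          conv_lhs => rw [hcover]
          exact measure_biUnion_finset hdisj fun S _ => (hG hs).inter (hE_meas S)
      _ = ∑ S ∈ (Finset.univ : Finset (Fin N)).powerset,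
            (r ^ S.card * Q S.card * (1 - r) ^ (N - S.card)) :=
          Finset.sum_congr rfl fun S _ => hterm S
      _ = ∑ k ∈ Finset.range ((Finset.univ : Finset (Fin N)).card + 1),
            ∑ T ∈ Finset.powersetCard k (Finset.univ : Finset (Fin N)),
              (r ^ T.card * Q T.card * (1 - r) ^ (N - T.card)) :=
          Finset.sum_powerset _ _
      _ = ∑ k ∈ Finset.range (N + 1),
            (N.choose k : ℝ≥0∞) * (r ^ k * Q k * (1 - r) ^ (N - k)) := by
          rw [Finset.card_univ, Fintype.card_fin]
          refine Finset.sum_congr rfl fun k _ => ?_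
          have h1 : ∀ T ∈ Finset.powersetCard k (Finset.univ : Finset (Fin N)),
              r ^ T.card * Q T.card * (1 - r) ^ (N - T.card)
                = r ^ k * Q k * (1 - r) ^ (N - k) := fun T hT => by
            rw [(Finset.mem_powersetCard.mp hT).2]
          rw [Finset.sum_congr rfl h1, Finset.sum_const, Finset.card_powersetCard,
            Finset.card_univ, Fintype.card_fin, nsmul_eq_mul]
  have hQmeas : ∀ k : ℕ, MeasurableSet {w : Fin k → ℝ | c * ∑ j, w j ∈ s} := fun k =>
    ((Finset.univ.measurable_sum fun j _ => measurable_pi_apply j).const_mul c) hs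
  have hbin : ∀ k : ℕ, μ {ω | Nα ω = k}
      = (N.choose k : ℝ≥0∞) * (r ^ k * (1 - r) ^ (N - k)) := by
    intro k
    rw [hNα_binomial k, hpr_eq]
    rw [ENNReal.ofReal_mul (by positivity), ENNReal.ofReal_mul (by positivity),
      ENNReal.ofReal_pow hpr0, ENNReal.ofReal_pow (by linarith : (0:ℝ) ≤ 1 - pr),
      ENNReal.ofReal_natCast, ENNReal.ofReal_sub 1 hpr0, ENNReal.ofReal_one, hr_def,
      mul_assoc]
  have key_rhs : μ ((fun ω => c * ∑ k ∈ Finset.range (Nα ω), Λt k ω) ⁻¹' s)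
      = ∑ k ∈ Finset.range (N + 1),
          (N.choose k : ℝ≥0∞) * (r ^ k * Q k * (1 - r) ^ (N - k)) := by
    set g : ℕ → Ω → ℝ := fun k ω => c * ∑ j ∈ Finset.range k, Λt j ω with hg_def
    have hg_meas : ∀ k, Measurable (g k) := fun k =>
      (Finset.measurable_sum _ fun j _ => hΛt_meas j).const_mul c
    have hdecomp : (fun ω => c * ∑ k ∈ Finset.range (Nα ω), Λt k ω) ⁻¹' s
        = ⋃ k : ℕ, (Nα ⁻¹' {k} ∩ g k ⁻¹' s) := by
      ext ω
      simp only [Set.mem_preimage, Set.mem_iUnion, Set.mem_inter_iff,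
        Set.mem_singleton_iff, hg_def]
      constructor
      · intro h; exact ⟨Nα ω, rfl, h⟩
      · rintro ⟨k, hk, h⟩; rwa [hk]
    have hterm : ∀ k : ℕ, μ (Nα ⁻¹' {k} ∩ g k ⁻¹' s) = μ {ω | Nα ω = k} * Q k := by
      intro k
      have hφ : Measurable (fun h : ℕ → ℝ => c * ∑ j ∈ Finset.range k, h j) :=
        (Finset.measurable_sum _ fun j _ => measurable_pi_apply j).const_mul c
      have hind : IndepFun Nα (g k) μ := by
        have := h_indep.comp measurable_id hφ
        exact this
      have h1 : μ (Nα ⁻¹' {k} ∩ g k ⁻¹' s)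
          = μ (Nα ⁻¹' {k}) * μ (g k ⁻¹' s) :=
        hind.measure_inter_preimage_eq_mul {k} s (measurableSet_singleton k) hs
      have h2 : Nα ⁻¹' {k} = {ω | Nα ω = k} := rfl
      have hsub : iIndepFun (fun j : Fin k => Λt j) μ :=
        NR_iIndepFun_precomp Λt (fun j : Fin k => (j : ℕ)) Fin.val_injective hΛt_indep
      have hmap : μ.map (fun ω (j : Fin k) => Λt j ω)
          = Measure.pi (fun _ : Fin k => ν₀) := by
        rw [NR_map_tuple_eq_pi (fun j : Fin k => Λt j) (fun j => hΛt_meas j) hsub]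
        congr 1
        funext j
        exact hmapΛt j
      have h3 : g k ⁻¹' s
          = (fun ω (j : Fin k) => Λt j ω) ⁻¹' {w : Fin k → ℝ | c * ∑ j, w j ∈ s} := by
        ext ω
        have hsum := Fin.sum_univ_eq_sum_range (fun m => Λt m ω) k
        simp only [Set.mem_preimage, Set.mem_setOf_eq, hg_def, hsum]
      have h4 : μ (g k ⁻¹' s) = Q k := by
        rw [h3, ← Measure.map_apply (f := fun ω (j : Fin k) => Λt j ω)
          (measurable_pi_lambda _ fun j => hΛt_meas j) (hQmeas k), hmap, hQ_def]
      rw [h1, h2, h4]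
    have hdisj : Pairwise (Function.onFun Disjoint
        fun k : ℕ => Nα ⁻¹' {k} ∩ g k ⁻¹' s) := by
      intro k l hkl
      refine Set.disjoint_left.mpr fun ω hω hω' => ?_
      exact hkl (hω.1.symm.trans hω'.1)
    have hmeasu : ∀ k : ℕ, MeasurableSet (Nα ⁻¹' {k} ∩ g k ⁻¹' s) := fun k =>
      (hNα_meas (measurableSet_singleton k)).inter (hg_meas k hs)
    rw [hdecomp, measure_iUnion hdisj hmeasu]
    rw [tsum_eq_sum (s := Finset.range (N + 1)) ?_]
    · refine Finset.sum_congr rfl fun k _ => ?_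
      rw [hterm k, hbin k]
      ring
    · intro k hk
      have hNk : N < k := by
        have := Finset.mem_range.not.mp hk
        omega
      rw [hterm k, hbin k, Nat.choose_eq_zero_of_lt hNk]
      simp
  rw [key_lhs, key_rhs]
end
end

section
/- Condition on Λ = (Λ_1,…,Λ_N), and consider the marked branching process (Z, J): Z_0 = 1 with the single individual's mark J_{0,1} uniform on {1,…,N}, and each individual bearing mark i gives birth, independently for each j ∈ {1,…,N}, to a Poisson(Λ_iΛ_j/L_N)-distributed number of children bearing mark j. Process the individuals generation by generation (and within a generation in order), pruning each individual whose mark has already appeared among previously processed individuals, together with all its descendants; let Ĵ_k denote the set of marks present in generation k of the pruned process. Also define the neighbourhood shells of G_N: N_0 = {i_0} with i_0 uniform on {1,…,N}, and N_{k+1} = the set of vertices outside N_0 ∪ … ∪ N_k that are adjacent to some vertex of N_k. Then, conditionally on Λ, the sequence of sets (Ĵ_k)_{k≥0} has the same distribution as the sequence (N_k)_{k≥0}. -/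
open MeasureTheory ProbabilityTheory Filter Set

noncomputable section

/-- Poisson edge rate for an unordered pair of vertices, given capacities `l`. -/
def edgeRate {N : ℕ} (l : Fin N → ℝ) : Sym2 (Fin N) → NNReal :=
  Sym2.lift ⟨fun i j => Real.toNNReal (l i * l j / ∑ k, l k),
    fun i j => by dsimp only; rw [mul_comm (l i) (l j)]⟩

/-- The simple graph associated with a family of edge multiplicities:
two distinct vertices are adjacent iff there is at least one edge between them. -/
def graphOf {N : ℕ} (e : Sym2 (Fin N) → ℕ) : SimpleGraph (Fin N) where
  Adj i j := i ≠ j ∧ 1 ≤ e s(i, j)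
  symm := ⟨fun i j h => ⟨h.1.symm, by rw [Sym2.eq_swap]; exact h.2⟩⟩
  loopless := ⟨fun i h => h.1 rfl⟩

/-- The list of children marks produced by individual number `i` of generation `n`
bearing mark `m`: for each mark `j` (in order), `B n i m j` children of mark `j`. -/
def childList (N : ℕ) (B : ℕ → ℕ → Fin N → Fin N → ℕ) (n i : ℕ) (m : Fin N) :
    List (Fin N) :=
  ((List.finRange N).map fun j => List.replicate (B n i m j) j).flatten

/-- The full marked branching process: the list of marks of generation `n`,
in order of birth, starting from a single individual with mark `r`. -/
def fullGen (N : ℕ) (B : ℕ → ℕ → Fin N → Fin N → ℕ) (r : Fin N) : ℕ → List (Fin N)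
  | 0 => [r]
  | n + 1 => (((fullGen N B r n).zipIdx.map Prod.swap).map fun p => childList N B n p.1 p.2).flatten

/-- Process a list of (position, mark) pairs in order, keeping an individual iff its
mark has not been seen before, and recording every processed mark as seen. -/
def processList (N : ℕ) : Finset (Fin N) → List (ℕ × Fin N) →
    List (ℕ × Fin N) × Finset (Fin N)
  | seen, [] => ([], seen)
  | seen, q :: rest =>
    let r := processList N (insert q.2 seen) rest
    (if q.2 ∈ seen then r.1 else q :: r.1, r.2)

/-- The global position in generation `n+1` of the first child of the individual
at position `i` of generation `n` (whose marks are listed in `g`). -/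
def offsetAt (N : ℕ) (B : ℕ → ℕ → Fin N → Fin N → ℕ) (g : List (Fin N)) (n i : ℕ) : ℕ :=
  (((g.take i).zipIdx.map Prod.swap).map fun p => (childList N B n p.1 p.2).length).sum

/-- The pruned ("reduced") process: the state after generation `k` consists of the
list of kept individuals of generation `k` (as position–mark pairs, in order) and
the set of marks seen so far.  An individual is processed only if its parent was
kept, and it is pruned iff its mark was already seen. -/
def prunedState (N : ℕ) (B : ℕ → ℕ → Fin N → Fin N → ℕ) (r : Fin N) :
    ℕ → List (ℕ × Fin N) × Finset (Fin N)
  | 0 => ([(0, r)], {r})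
  | n + 1 =>
    let st := prunedState N B r n
    processList N st.2
      ((st.1.map fun q =>
        ((childList N B n q.1 q.2).zipIdx.map Prod.swap).map fun c =>
          (offsetAt N B (fullGen N B r n) n q.1 + c.1, c.2)).flatten)

/-- The set `Ĵ_k` of marks present in generation `k` of the pruned process. -/
def prunedMarks (N : ℕ) (B : ℕ → ℕ → Fin N → Fin N → ℕ) (r : Fin N) (k : ℕ) :
    Set (Fin N) :=
  {j | ∃ q ∈ (prunedState N B r k).1, q.2 = j}

/-- Auxiliary for neighbourhood shells: (current shell, union of shells so far). -/
def shellsAux (N : ℕ) (G : SimpleGraph (Fin N)) (v : Fin N) :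
    ℕ → Set (Fin N) × Set (Fin N)
  | 0 => ({v}, {v})
  | n + 1 =>
    let p := shellsAux N G v n
    ({j | j ∉ p.2 ∧ ∃ i ∈ p.1, G.Adj i j},
      p.2 ∪ {j | j ∉ p.2 ∧ ∃ i ∈ p.1, G.Adj i j})

/-- The `k`-th neighbourhood shell `N_k(v)` of `v` in `G`. -/
def shells (N : ℕ) (G : SimpleGraph (Fin N)) (v : Fin N) (k : ℕ) : Set (Fin N) :=
  (shellsAux N G v k).1


open MeasureTheory ProbabilityTheory Filter Set

noncomputable section

lemma msMono {Ω : Type*} {m m' : MeasurableSpace Ω} (h : m ≤ m') {s : Set Ω}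
    (hs : MeasurableSet[m] s) : MeasurableSet[m'] s :=
  MeasurableSpace.le_def.mp h s hs

/-- A function of finitely many ℕ-valued measurable functions has measurable level sets. -/
lemma meas_dep {Ω : Type} {m' : MeasurableSpace Ω} {γ : Type*} [Finite γ]
    (X : γ → Ω → ℕ) (hX : ∀ c t, MeasurableSet[m'] {ω | X c ω = t})
    {α : Type*} (F : (γ → ℕ) → α) (a : α) :
    MeasurableSet[m'] {ω | F (fun c => X c ω) = a} := by
  have hc : Countable γ := Finite.to_countable
  have : {ω | F (fun c => X c ω) = a}
      = ⋃ t ∈ {t : γ → ℕ | F t = a}, ⋂ c, {ω | X c ω = t c} := by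
    ext ω
    simp only [Set.mem_setOf_eq, Set.mem_iUnion, Set.mem_iInter]
    constructor
    · intro h; exact ⟨fun c => X c ω, h, fun c => rfl⟩
    · rintro ⟨t, ht, hct⟩
      have : (fun c => X c ω) = t := funext fun c => hct c
      rw [this]; exact ht
  rw [this]
  exact MeasurableSet.biUnion (Set.to_countable _)
    (fun t _ => MeasurableSet.iInter (fun c => hX c (t c)))

/-- Joint independence: (J together with the F i, i ∉ Sf) is independent of (F i, i ∈ Sf). -/
lemma indep_join {Ω ι κ : Type*} {mΩ : MeasurableSpace Ω} [mκ : MeasurableSpace κ]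
    {μ : Measure Ω} [IsProbabilityMeasure μ]
    (F : ι → Ω → ℕ) (hFm : ∀ i, Measurable (F i))
    (hind : iIndepFun F μ)
    (J : Ω → κ) (hJm : Measurable J)
    (hJind : IndepFun J (fun ω i => F i ω) μ)
    (Sf : Set ι) :
    Indep (MeasurableSpace.comap J mκ ⊔ ⨆ i ∈ Sfᶜ, MeasurableSpace.comap (F i) inferInstance)
      (⨆ i ∈ Sf, MeasurableSpace.comap (F i) inferInstance) μ := by
  classical
  set mJ := MeasurableSpace.comap J mκ with hmJ
  set mAll : MeasurableSpace Ω := ⨆ i, MeasurableSpace.comap (F i) inferInstance with hmAll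
  set mC : MeasurableSpace Ω := ⨆ i ∈ Sfᶜ, MeasurableSpace.comap (F i) inferInstance with hmC
  set m2 : MeasurableSpace Ω := ⨆ i ∈ Sf, MeasurableSpace.comap (F i) inferInstance with hm2
  have h1 : Indep mJ mAll μ := by
    have h := (IndepFun_iff_Indep _ _ _).1 hJind
    have hcom : MeasurableSpace.comap (fun ω (i : ι) => F i ω) MeasurableSpace.pi = mAll := by
      rw [MeasurableSpace.pi, MeasurableSpace.comap_iSup, hmAll]
      congr 1
      funext i
      rw [MeasurableSpace.comap_comp]
      rfl
    rwa [hcom] at h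
  have h2 : Indep mC m2 μ := by
    refine indep_iSup_of_disjoint (fun i => (hFm i).comap_le) ?_ disjoint_compl_left
    rw [← iIndepFun_iff_iIndep]; exact hind
  set p1 : Set (Set Ω) :=
    {s | ∃ a, MeasurableSet[mJ] a ∧ ∃ c, MeasurableSet[mC] c ∧ s = a ∩ c} with hp1
  have hle2 : m2 ≤ mAll :=
    iSup₂_le fun i _ => le_iSup (fun i => MeasurableSpace.comap (F i) inferInstance) i
  have hleC : mC ≤ mAll :=
    iSup₂_le fun i _ => le_iSup (fun i => MeasurableSpace.comap (F i) inferInstance) i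
  have hmJle : mJ ≤ mΩ := hJm.comap_le
  have hmAllle : mAll ≤ mΩ := iSup_le fun i => (hFm i).comap_le
  have hgen1 : MeasurableSpace.generateFrom p1 = mJ ⊔ mC := by
    apply le_antisymm
    · refine MeasurableSpace.generateFrom_le ?_
      rintro s ⟨a, ha, c, hc, rfl⟩
      exact MeasurableSet.inter (msMono le_sup_left ha) (msMono le_sup_right hc)
    · refine sup_le ?_ ?_
      · intro s hs
        exact MeasurableSpace.measurableSet_generateFrom
          ⟨s, hs, Set.univ, MeasurableSet.univ, (Set.inter_univ s).symm⟩
      · intro s hs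
        exact MeasurableSpace.measurableSet_generateFrom
          ⟨Set.univ, MeasurableSet.univ, s, hs, (Set.univ_inter s).symm⟩
  have hgen2 : MeasurableSpace.generateFrom {s | MeasurableSet[m2] s} = m2 :=
    MeasurableSpace.generateFrom_measurableSet
  rw [← hgen1, ← hgen2]
  refine IndepSets.indep' ?_ ?_ ?_ ?_ ?_
  · rintro s ⟨a, ha, c, hc, rfl⟩
    exact (msMono hmJle ha).inter (msMono hmAllle (msMono hleC hc))
  · intro s hs; exact msMono hmAllle (msMono hle2 hs)
  · rintro s ⟨a, ha, c, hc, rfl⟩ t ⟨a', ha', c', hc', rfl⟩ _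
    exact ⟨a ∩ a', ha.inter ha', c ∩ c', hc.inter hc', by ext x; simp; tauto⟩
  · exact MeasurableSpace.isPiSystem_measurableSet
  · rw [IndepSets_iff]
    rintro s t ⟨a, ha, c, hc, rfl⟩ ht
    have key : ∀ u, MeasurableSet[mAll] u → μ (a ∩ u) = μ a * μ u :=
      fun u hu => (Indep_iff _ _ _).1 h1 a u ha hu
    have h2' : μ (c ∩ t) = μ c * μ t := (Indep_iff _ _ _).1 h2 c t hc ht
    have hct : MeasurableSet[mAll] (c ∩ t) := (msMono hleC hc).inter (msMono hle2 ht)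
    calc μ (a ∩ c ∩ t) = μ (a ∩ (c ∩ t)) := by rw [Set.inter_assoc]
      _ = μ a * (μ c * μ t) := by rw [key _ hct, h2']
      _ = μ a * μ c * μ t := by ring
      _ = μ (a ∩ c) * μ t := by rw [key c (msMono hleC hc)]
/-- Probability that a Poisson(l m * l j / L) variable is zero. -/
def eZ {N : ℕ} (l : Fin N → ℝ) (m j : Fin N) : ENNReal :=
  poissonMeasure (Real.toNNReal (l m * l j / ∑ k, l k)) {0}

def Wb {N : ℕ} (l : Fin N → ℝ) (m j : Fin N) (bit : Bool) : ENNReal :=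
  if bit then 1 - eZ l m j else eZ l m j

/-- Admissible indicator patterns for one exploration step. -/
def goodPattern {N : ℕ} (S T U : Finset (Fin N)) (b : Fin N → Fin N → Bool) : Prop :=
  (∀ m j, b m j = true → m ∈ S ∧ j ∉ T) ∧ ∀ j : Fin N, (j ∈ U ↔ ∃ m, b m j = true)

-- The conditional probability of one exploration step: current (kept) marks `S`,
-- seen marks `T`, next-generation marks `U`.
open scoped Classical in
def stepWeight {N : ℕ} (l : Fin N → ℝ) (S T U : Finset (Fin N)) : ENNReal :=
  ∑ b : Fin N → Fin N → Bool,
    if goodPattern S T U b then ∏ m ∈ S, ∏ j ∈ Tᶜ, Wb l m j (b m j) else 0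

set_option maxHeartbeats 1000000 in
lemma step_prob {Ω : Type} [MeasurableSpace Ω] (μ : Measure Ω) [IsProbabilityMeasure μ]
    {N : ℕ} (l : Fin N → ℝ) {ι : Type*} (F : ι → Ω → ℕ)
    (hmeas : ∀ i, Measurable (F i))
    (hind : iIndepFun F μ)
    (S T U : Finset (Fin N)) (key : Fin N → Fin N → ι)
    (hkey : ∀ m m' j j', m ∈ S → m' ∈ S → j ∉ T → j' ∉ T →
      key m j = key m' j' → m = m' ∧ j = j')
    (hrate : ∀ m ∈ S, ∀ j ∈ Tᶜ, μ (F (key m j) ⁻¹' {0}) = eZ l m j)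
    (D : Set Ω) (hD : MeasurableSet D)
    (hindep : ∀ G : Set Ω,
      MeasurableSet[⨆ (p : Fin N × Fin N) (_ : p ∈ S ×ˢ Tᶜ),
        MeasurableSpace.comap (F (key p.1 p.2)) inferInstance] G →
      μ (D ∩ G) = μ D * μ G) :
    μ (D ∩ {ω | ∀ j : Fin N, (j ∈ U ↔ (j ∉ T ∧ ∃ m ∈ S, F (key m j) ω ≠ 0))})
      = μ D * stepWeight l S T U := by
  classical
  set Ab : Bool → Set ℕ := fun bit => if bit then ({0} : Set ℕ)ᶜ else {0} with hAb
  set Eb : (Fin N → Fin N → Bool) → Set Ω := fun b =>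
    ⋂ (p : Fin N × Fin N) (_ : p ∈ S ×ˢ Tᶜ), F (key p.1 p.2) ⁻¹' Ab (b p.1 p.2) with hEb
  have hAbm : ∀ bit, MeasurableSet (Ab bit) := by
    intro bit; cases bit <;> simp [hAb]
  -- each Eb is in the supremum σ-algebra
  have hEbm : ∀ b, MeasurableSet[⨆ (p : Fin N × Fin N) (_ : p ∈ S ×ˢ Tᶜ),
      MeasurableSpace.comap (F (key p.1 p.2)) inferInstance] (Eb b) := by
    intro b
    refine MeasurableSet.iInter fun p => MeasurableSet.iInter fun hp => ?_
    have : MeasurableSet[MeasurableSpace.comap (F (key p.1 p.2)) inferInstance]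
        (F (key p.1 p.2) ⁻¹' Ab (b p.1 p.2)) := ⟨Ab (b p.1 p.2), hAbm _, rfl⟩
    exact msMono (le_iSup₂ (f := fun (p : Fin N × Fin N) (_ : p ∈ S ×ˢ Tᶜ) =>
      MeasurableSpace.comap (F (key p.1 p.2)) inferInstance) p hp) this
  -- the step event is the disjoint union of the Eb over good patterns
  have hunion : {ω | ∀ j : Fin N, (j ∈ U ↔ (j ∉ T ∧ ∃ m ∈ S, F (key m j) ω ≠ 0))}
      = ⋃ b ∈ Finset.univ.filter (fun b => goodPattern S T U b), Eb b := by
    ext ω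
    simp only [Set.mem_setOf_eq, Set.mem_iUnion, Finset.mem_filter, Finset.mem_univ, true_and]
    constructor
    · intro h
      refine ⟨fun m j => decide (m ∈ S ∧ j ∉ T ∧ F (key m j) ω ≠ 0), ⟨?_, ?_⟩, ?_⟩
      · intro m j hb
        have := of_decide_eq_true hb
        exact ⟨this.1, this.2.1⟩
      · intro j
        rw [h j]
        constructor
        · rintro ⟨hjT, m, hm, hF⟩
          exact ⟨m, decide_eq_true ⟨hm, hjT, hF⟩⟩
        · rintro ⟨m, hb⟩
          have := of_decide_eq_true hb
          exact ⟨this.2.1, m, this.1, this.2.2⟩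
      · refine Set.mem_iInter.2 fun p => Set.mem_iInter.2 fun hp => ?_
        rw [Finset.mem_product] at hp
        have hpS := hp.1
        have hpT := Finset.mem_compl.1 hp.2
        by_cases hF : F (key p.1 p.2) ω ≠ 0
        · have : decide (p.1 ∈ S ∧ p.2 ∉ T ∧ F (key p.1 p.2) ω ≠ 0) = true :=
            decide_eq_true ⟨hpS, hpT, hF⟩
          simp only [this, hAb, Set.mem_preimage]
          simpa using hF
        · have : decide (p.1 ∈ S ∧ p.2 ∉ T ∧ F (key p.1 p.2) ω ≠ 0) = false := by
            simp [hF]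
          simp only [this, hAb, Set.mem_preimage]
          simpa using not_not.mp hF
    · rintro ⟨b, ⟨hsupp, hcol⟩, hmem⟩
      intro j
      rw [hcol j]
      constructor
      · rintro ⟨m, hb⟩
        obtain ⟨hmS, hjT⟩ := hsupp m j hb
        refine ⟨hjT, m, hmS, ?_⟩
        have := Set.mem_iInter.1 (Set.mem_iInter.1 hmem (m, j))
          (Finset.mem_product.2 ⟨hmS, Finset.mem_compl.2 hjT⟩)
        simp only [hb, hAb, Set.mem_preimage] at this
        simpa using this
      · rintro ⟨hjT, m, hmS, hF⟩
        refine ⟨m, ?_⟩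
        have := Set.mem_iInter.1 (Set.mem_iInter.1 hmem (m, j))
          (Finset.mem_product.2 ⟨hmS, Finset.mem_compl.2 hjT⟩)
        by_contra hb
        rw [Bool.not_eq_true] at hb
        simp only [hb, hAb, Set.mem_preimage] at this
        simp at this
        exact hF this
  -- disjointness
  have hdisj : ∀ b ∈ Finset.univ.filter (fun b => goodPattern S T U b),
      ∀ b' ∈ Finset.univ.filter (fun b => goodPattern S T U b), b ≠ b' →
      Disjoint (D ∩ Eb b) (D ∩ Eb b') := by
    intro b hb b' hb' hne
    simp only [Finset.mem_filter] at hb hb'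
    rw [Set.disjoint_iff]
    rintro ω ⟨⟨_, h1⟩, ⟨_, h2⟩⟩
    exfalso
    apply hne
    funext m j
    by_cases hmj : m ∈ S ∧ j ∉ T
    · have e1 := Set.mem_iInter.1 (Set.mem_iInter.1 h1 (m, j))
        (Finset.mem_product.2 ⟨hmj.1, Finset.mem_compl.2 hmj.2⟩)
      have e2 := Set.mem_iInter.1 (Set.mem_iInter.1 h2 (m, j))
        (Finset.mem_product.2 ⟨hmj.1, Finset.mem_compl.2 hmj.2⟩)
      have hval : ∀ bit : Bool, ω ∈ F (key m j) ⁻¹' Ab bit →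
          bit = decide (F (key m j) ω ≠ 0) := by
        intro bit hb2
        cases bit <;> simp only [hAb, Set.mem_preimage, if_pos, if_neg,
          Bool.false_eq_true, if_true, if_false] at hb2 <;> simp_all
      rw [hval _ e1, hval _ e2]
    · have n1 : b m j = false := by
        by_contra h
        rw [Bool.not_eq_false] at h
        exact hmj (hb.2.1 m j h)
      have n2 : b' m j = false := by
        by_contra h
        rw [Bool.not_eq_false] at h
        exact hmj (hb'.2.1 m j h)
      rw [n1, n2]
  -- probability of each Eb
  have hprob : ∀ b : Fin N → Fin N → Bool,
      μ (Eb b) = ∏ m ∈ S, ∏ j ∈ Tᶜ, Wb l m j (b m j) := by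
    intro b
    have hinj : ∀ p ∈ S ×ˢ Tᶜ, ∀ p' ∈ S ×ˢ Tᶜ,
        key p.1 p.2 = key p'.1 p'.2 → p = p' := by
      rintro ⟨m, j⟩ hp ⟨m', j'⟩ hp' h
      rw [Finset.mem_product] at hp hp'
      obtain ⟨h1, h2⟩ := hkey m m' j j' hp.1 hp'.1
        (Finset.mem_compl.1 hp.2) (Finset.mem_compl.1 hp'.2) h
      simp [h1, h2]
    set keyf : Fin N × Fin N → ι := fun p => key p.1 p.2 with hkeyf
    set Jf : Finset ι := (S ×ˢ Tᶜ).image keyf with hJf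
    set sets : ι → Set Ω := fun i =>
      ⋂ p ∈ (S ×ˢ Tᶜ).filter (fun p => keyf p = i), F i ⁻¹' Ab (b p.1 p.2) with hsets
    have hEbeq : Eb b = ⋂ i ∈ Jf, sets i := by
      ext ω
      simp only [hEb, hsets, hJf, Set.mem_iInter, Finset.mem_image, Finset.mem_filter]
      constructor
      · rintro h i ⟨p, hp, rfl⟩ p' ⟨hp', hkp⟩
        have h2 := h p' hp'
        rw [← hkp]
        exact h2
      · intro h p hp
        exact h (keyf p) ⟨p, hp, rfl⟩ p ⟨hp, rfl⟩
    have hsetsm : ∀ i ∈ Jf, MeasurableSet (sets i) :=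
      fun i _ => MeasurableSet.biInter (Finset.countable_toSet _)
        (fun p _ => (hmeas i) (hAbm _))
    have h1 : μ (Eb b) = ∏ i ∈ Jf, μ (sets i) := by
      rw [hEbeq]
      exact hind.meas_biInter (fun i hi => by
        refine ⟨⋂ p ∈ (S ×ˢ Tᶜ).filter (fun p => keyf p = i), Ab (b p.1 p.2), ?_, ?_⟩
        · exact MeasurableSet.biInter (Finset.countable_toSet _) (fun p _ => hAbm _)
        · simp only [hsets, Set.preimage_iInter₂])
    rw [h1, hJf, Finset.prod_image hinj]
    rw [Finset.prod_product]
    apply Finset.prod_congr rfl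
    intro m hm
    apply Finset.prod_congr rfl
    intro j hj
    have hfil : (S ×ˢ Tᶜ).filter (fun p => keyf p = keyf (m, j)) = {(m, j)} := by
      ext p
      simp only [Finset.mem_filter, Finset.mem_singleton]
      constructor
      · rintro ⟨hp, hk⟩
        exact hinj p hp (m, j) (Finset.mem_product.2 ⟨hm, hj⟩) hk
      · rintro rfl
        exact ⟨Finset.mem_product.2 ⟨hm, hj⟩, rfl⟩
    have : sets (keyf (m, j)) = F (keyf (m, j)) ⁻¹' Ab (b m j) := by
      simp only [hsets]
      rw [hfil]
      simp
    rw [this]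
    cases hbv : b m j
    · rw [show Ab false = ({0} : Set ℕ) from rfl, hrate m hm j hj]
      simp [Wb]
    · rw [show Ab true = (({0} : Set ℕ))ᶜ from rfl, Set.preimage_compl,
        prob_compl_eq_one_sub ((hmeas _) (measurableSet_singleton 0)), hrate m hm j hj]
      simp [Wb]
  -- assemble
  have hEbAmb : ∀ b, MeasurableSet (Eb b) := fun b =>
    MeasurableSet.iInter fun p => MeasurableSet.iInter fun _ => (hmeas _) (hAbm _)
  rw [hunion, Set.inter_iUnion₂,
    measure_biUnion_finset hdisj (fun b _ => hD.inter (hEbAmb b))]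
  have hterm : ∀ b ∈ Finset.univ.filter (fun b => goodPattern S T U b),
      μ (D ∩ Eb b) = μ D * (∏ m ∈ S, ∏ j ∈ Tᶜ, Wb l m j (b m j)) := by
    intro b _
    rw [hindep (Eb b) (hEbm b), hprob b]
  rw [Finset.sum_congr rfl hterm, ← Finset.mul_sum]
  congr 1
  rw [stepWeight, Finset.sum_filter]
lemma childList_mem {N : ℕ} (b : ℕ → ℕ → Fin N → Fin N → ℕ) (n i : ℕ) (m j : Fin N) :
    j ∈ childList N b n i m ↔ b n i m j ≠ 0 := by
  simp only [childList, List.mem_flatten, List.mem_map]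
  constructor
  · rintro ⟨L, ⟨j', _, rfl⟩, hj⟩
    rw [List.mem_replicate] at hj
    rw [hj.2]; exact hj.1
  · intro h
    exact ⟨List.replicate (b n i m j) j, ⟨j, List.mem_finRange j, rfl⟩,
      List.mem_replicate.2 ⟨h, rfl⟩⟩

lemma marks_cons {N : ℕ} (q : ℕ × Fin N) (rest : List (ℕ × Fin N)) :
    {m | ∃ q' ∈ (q :: rest), q'.2 = m}
      = insert q.2 {m | ∃ q' ∈ rest, q'.2 = m} := by
  ext m
  simp only [Set.mem_setOf_eq, List.mem_cons, Set.mem_insert_iff]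
  constructor
  · rintro ⟨q', (rfl | h), rfl⟩
    · exact Or.inl rfl
    · exact Or.inr ⟨q', h, rfl⟩
  · rintro (rfl | ⟨q', h, rfl⟩)
    · exact ⟨q, Or.inl rfl, rfl⟩
    · exact ⟨q', Or.inr h, rfl⟩

lemma processList_snd {N : ℕ} : ∀ (L : List (ℕ × Fin N)) (s : Finset (Fin N)),
    ((processList N s L).2 : Set (Fin N)) = ↑s ∪ {m | ∃ q ∈ L, q.2 = m}
  | [], s => by simp [processList]
  | q :: rest, s => by
    have ih := processList_snd rest (insert q.2 s)
    simp only [processList]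
    rw [ih, marks_cons]
    ext m
    by_cases h1 : m = q.2 <;> simp [h1] <;> tauto

lemma processList_marks {N : ℕ} : ∀ (L : List (ℕ × Fin N)) (s : Finset (Fin N)),
    {m | ∃ q ∈ (processList N s L).1, q.2 = m} = {m | ∃ q ∈ L, q.2 = m} \ ↑s
  | [], s => by simp [processList]
  | q :: rest, s => by
    have ih := processList_marks rest (insert q.2 s)
    simp only [processList]
    by_cases hq : q.2 ∈ s
    · rw [if_pos hq, ih, marks_cons]
      ext m
      by_cases h1 : m = q.2 <;> simp [h1, hq] <;> tauto
    · rw [if_neg hq, marks_cons, marks_cons, ih]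
      ext m
      by_cases h1 : m = q.2 <;> simp [h1, hq] <;> tauto

lemma processList_nodup {N : ℕ} : ∀ (L : List (ℕ × Fin N)) (s : Finset (Fin N)),
    ((processList N s L).1.map Prod.snd).Nodup ∧ ∀ q ∈ (processList N s L).1, q.2 ∉ s
  | [], s => by simp [processList]
  | q :: rest, s => by
    obtain ⟨ih1, ih2⟩ := processList_nodup rest (insert q.2 s)
    simp only [processList]
    by_cases hq : q.2 ∈ s
    · rw [if_pos hq]
      exact ⟨ih1, fun q' hq' hmem => ih2 q' hq' (Finset.mem_insert_of_mem hmem)⟩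
    · rw [if_neg hq]
      constructor
      · simp only [List.map_cons, List.nodup_cons]
        refine ⟨fun hmem => ?_, ih1⟩
        rw [List.mem_map] at hmem
        obtain ⟨q', hq', hq2⟩ := hmem
        exact ih2 q' hq' (hq2 ▸ Finset.mem_insert_self q.2 s)
      · intro q' hq'
        rcases List.mem_cons.1 hq' with rfl | h
        · exact hq
        · exact fun hmem => ih2 q' h (Finset.mem_insert_of_mem hmem)

/-- The list of children (with global positions) of the kept generation `st`. -/
def genChildren (N : ℕ) (b : ℕ → ℕ → Fin N → Fin N → ℕ) (st : List (ℕ × Fin N))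
    (g : List (Fin N)) (n : ℕ) : List (ℕ × Fin N) :=
  (st.map fun q => ((childList N b n q.1 q.2).zipIdx.map Prod.swap).map fun c =>
    (offsetAt N b g n q.1 + c.1, c.2)).flatten

lemma prunedState_succ {N : ℕ} (b : ℕ → ℕ → Fin N → Fin N → ℕ) (r : Fin N) (k : ℕ) :
    prunedState N b r (k + 1) = processList N (prunedState N b r k).2
      (genChildren N b (prunedState N b r k).1 (fullGen N b r k) k) := rfl

lemma mem_enum' {α : Type*} {l : List α} {p : ℕ × α} :
    p ∈ l.zipIdx.map Prod.swap ↔ l[p.1]? = some p.2 := by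
  rw [List.mem_map]
  constructor
  · rintro ⟨x, hx, rfl⟩
    exact List.mem_zipIdx_iff_getElem?.1 hx
  · intro h
    exact ⟨p.swap, List.mem_zipIdx_iff_getElem?.2 h, rfl⟩

lemma genChildren_marks {N : ℕ} (b : ℕ → ℕ → Fin N → Fin N → ℕ)
    (st : List (ℕ × Fin N)) (g : List (Fin N)) (n : ℕ) :
    {m | ∃ p ∈ genChildren N b st g n, p.2 = m}
      = {j | ∃ q ∈ st, b n q.1 q.2 j ≠ 0} := by
  ext m
  simp only [genChildren, Set.mem_setOf_eq, List.mem_flatten, List.mem_map]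
  constructor
  · rintro ⟨p, ⟨L, ⟨q, hq, rfl⟩, hp⟩, rfl⟩
    rw [List.mem_map] at hp
    obtain ⟨c, hc, rfl⟩ := hp
    refine ⟨q, hq, ?_⟩
    rw [← childList_mem b n q.1 q.2]
    have : c ∈ (childList N b n q.1 q.2).zipIdx.map Prod.swap := hc
    have h2 := mem_enum'.1 this
    exact List.mem_of_getElem? h2
  · rintro ⟨q, hq, hb⟩
    rw [← childList_mem b n q.1 q.2] at hb
    obtain ⟨i, hi, hget⟩ := List.mem_iff_getElem.1 hb
    refine ⟨(offsetAt N b g n q.1 + i, m), ⟨_, ⟨q, hq, rfl⟩, ?_⟩, rfl⟩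
    rw [List.mem_map]
    refine ⟨(i, m), ?_, rfl⟩
    rw [mem_enum']
    rw [List.getElem?_eq_getElem hi, hget]

lemma prunedMarks_zero {N : ℕ} (b : ℕ → ℕ → Fin N → Fin N → ℕ) (r : Fin N) :
    prunedMarks N b r 0 = {r} := by
  ext m
  simp [prunedMarks, prunedState]

lemma prunedMarks_succ {N : ℕ} (b : ℕ → ℕ → Fin N → Fin N → ℕ) (r : Fin N) (k : ℕ) :
    prunedMarks N b r (k + 1)
      = {j | ∃ q ∈ (prunedState N b r k).1, b k q.1 q.2 j ≠ 0}
        \ ↑(prunedState N b r k).2 := by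
  rw [prunedMarks, prunedState_succ]
  rw [show {j | ∃ q ∈ (processList N (prunedState N b r k).2
      (genChildren N b (prunedState N b r k).1 (fullGen N b r k) k)).1, q.2 = j}
    = {m | ∃ q ∈ (processList N (prunedState N b r k).2
      (genChildren N b (prunedState N b r k).1 (fullGen N b r k) k)).1, q.2 = m} from rfl]
  rw [processList_marks, genChildren_marks]

lemma prunedState_nodup {N : ℕ} (b : ℕ → ℕ → Fin N → Fin N → ℕ) (r : Fin N) :
    ∀ k, ((prunedState N b r k).1.map Prod.snd).Nodup
  | 0 => by simp [prunedState]
  | k + 1 => by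
    rw [prunedState_succ]
    exact (processList_nodup _ _).1

lemma prunedState_snd {N : ℕ} (b : ℕ → ℕ → Fin N → Fin N → ℕ) (r : Fin N) :
    ∀ k, ((prunedState N b r k).2 : Set (Fin N))
      = {m | ∃ k' ≤ k, m ∈ prunedMarks N b r k'}
  | 0 => by
    ext m
    simp [prunedState, prunedMarks_zero, Nat.le_zero]
  | k + 1 => by
    have ih := prunedState_snd b r k
    rw [prunedState_succ, processList_snd, ih, genChildren_marks]
    ext m
    simp only [Set.mem_union, Set.mem_setOf_eq]
    constructor
    · rintro (⟨k', hk', hm⟩ | hm)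
      · exact ⟨k', le_trans hk' (Nat.le_succ k), hm⟩
      · by_cases hseen : m ∈ ((prunedState N b r k).2 : Set (Fin N))
        · rw [ih] at hseen
          obtain ⟨k', hk', hm'⟩ := hseen
          exact ⟨k', le_trans hk' (Nat.le_succ k), hm'⟩
        · refine ⟨k + 1, le_refl _, ?_⟩
          rw [prunedMarks_succ]
          exact ⟨hm, hseen⟩
    · rintro ⟨k', hk', hm⟩
      rcases Nat.lt_or_ge k' (k + 1) with h | h
      · exact Or.inl ⟨k', Nat.lt_succ_iff.1 h, hm⟩
      · have : k' = k + 1 := le_antisymm hk' h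
        subst this
        rw [prunedMarks_succ] at hm
        exact Or.inr hm.1

lemma prunedMarks_disj {N : ℕ} (b : ℕ → ℕ → Fin N → Fin N → ℕ) (r : Fin N) (k : ℕ) :
    ∀ m ∈ prunedMarks N b r (k + 1), ¬ ∃ k' ≤ k, m ∈ prunedMarks N b r k' := by
  intro m hm
  rw [prunedMarks_succ] at hm
  intro hex
  apply hm.2
  rw [prunedState_snd]
  exact hex

/-- position in a kept list of the individual bearing a given mark -/
def posIn {N : ℕ} (L : List (ℕ × Fin N)) (m : Fin N) : ℕ :=
  ((L.find? (fun q => q.2 = m)).map Prod.fst).getD 0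

lemma posIn_eq {N : ℕ} : ∀ (L : List (ℕ × Fin N)), (L.map Prod.snd).Nodup →
    ∀ q ∈ L, posIn L q.2 = q.1
  | [], _, q, hq => absurd hq List.not_mem_nil
  | a :: rest, hnd, q, hq => by
    simp only [List.map_cons, List.nodup_cons] at hnd
    rcases List.mem_cons.1 hq with rfl | h
    · simp [posIn, List.find?_cons_of_pos]
    · by_cases hqa : a.2 = q.2
      · exfalso
        apply hnd.1
        rw [hqa, List.mem_map]
        exact ⟨q, h, rfl⟩
      · have : posIn (a :: rest) q.2 = posIn rest q.2 := by
          simp only [posIn]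
          rw [List.find?_cons_of_neg]
          simp [hqa]
        rw [this]
        exact posIn_eq rest hnd.2 q h

-- shells lemmas
lemma shells_succ_aux {N : ℕ} (G : SimpleGraph (Fin N)) (v : Fin N) (k : ℕ) :
    shells N G v (k + 1) = {j | j ∉ (shellsAux N G v k).2
      ∧ ∃ i ∈ (shellsAux N G v k).1, G.Adj i j} := rfl

lemma shells_zero {N : ℕ} (G : SimpleGraph (Fin N)) (v : Fin N) :
    shells N G v 0 = {v} := rfl

lemma shellsAux_snd {N : ℕ} (G : SimpleGraph (Fin N)) (v : Fin N) :
    ∀ k, (shellsAux N G v k).2 = {j | ∃ k' ≤ k, j ∈ shells N G v k'}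
  | 0 => by
    ext m
    simp [shellsAux, shells, Nat.le_zero]
  | k + 1 => by
    have ih := shellsAux_snd G v k
    show (shellsAux N G v k).2 ∪ _ = _
    rw [ih]
    ext m
    simp only [Set.mem_union, Set.mem_setOf_eq]
    constructor
    · rintro (⟨k', hk', hm⟩ | hm)
      · exact ⟨k', le_trans hk' (Nat.le_succ k), hm⟩
      · refine ⟨k + 1, le_refl _, ?_⟩
        rw [shells_succ_aux G v k]
        exact ⟨by rw [ih]; exact hm.1, hm.2⟩
    · rintro ⟨k', hk', hm⟩
      rcases Nat.lt_or_ge k' (k + 1) with h | h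
      · exact Or.inl ⟨k', Nat.lt_succ_iff.1 h, hm⟩
      · have : k' = k + 1 := le_antisymm hk' h
        subst this
        rw [shells_succ_aux G v k] at hm
        right
        exact ⟨fun hex => hm.1 (by rw [ih]; exact hex), hm.2⟩

lemma shells_succ {N : ℕ} (G : SimpleGraph (Fin N)) (v : Fin N) (k : ℕ) :
    shells N G v (k + 1) = {j | j ∉ {m | ∃ k' ≤ k, m ∈ shells N G v k'}
      ∧ ∃ i ∈ shells N G v k, G.Adj i j} := by
  rw [shells_succ_aux G v k, shellsAux_snd]
  rfl
section Meas

variable {Ω : Type} {mΩ : MeasurableSpace Ω} {N : ℕ}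

/-- σ-algebra generated by the root mark and the branching variables of generations `< k`. -/
def mPastB (B : ℕ → ℕ → Fin N → Fin N → Ω → ℕ) (J0 : Ω → Fin N) (k : ℕ) :
    MeasurableSpace Ω :=
  MeasurableSpace.comap J0 inferInstance ⊔
    ⨆ q ∈ {q : ℕ × ℕ × Fin N × Fin N | q.1 < k},
      MeasurableSpace.comap (fun ω => B q.1 q.2.1 q.2.2.1 q.2.2.2 ω) inferInstance

variable (B : ℕ → ℕ → Fin N → Fin N → Ω → ℕ) (J0 : Ω → Fin N)

lemma mPastB_mono {k k' : ℕ} (h : k ≤ k') : mPastB B J0 k ≤ mPastB B J0 k' := by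
  refine sup_le_sup_left ?_ _
  refine iSup₂_le fun q hq => ?_
  exact le_iSup₂ (f := fun q (_ : q ∈ {q : ℕ × ℕ × Fin N × Fin N | q.1 < k'}) =>
    MeasurableSpace.comap (fun ω => B q.1 q.2.1 q.2.2.1 q.2.2.2 ω) inferInstance)
    q (lt_of_lt_of_le hq h)

lemma mPastB_le (hBm : ∀ a b c d, Measurable (B a b c d)) (hJ0m : Measurable J0) (k : ℕ) :
    mPastB B J0 k ≤ mΩ := by
  refine sup_le hJ0m.comap_le (iSup₂_le fun q _ => (hBm _ _ _ _).comap_le)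

lemma measJ0 (k : ℕ) (s : Set (Fin N)) : MeasurableSet[mPastB B J0 k] (J0 ⁻¹' s) :=
  msMono le_sup_left ⟨s, (Set.toFinite s).measurableSet, rfl⟩

lemma measB {k : ℕ} (a i : ℕ) (c d : Fin N) (ha : a < k) (s : Set ℕ) :
    MeasurableSet[mPastB B J0 k] ((B a i c d) ⁻¹' s) := by
  have h1 : MeasurableSet[MeasurableSpace.comap
      (fun ω => B (a,i,c,d).1 (a,i,c,d).2.1 (a,i,c,d).2.2.1 (a,i,c,d).2.2.2 ω)
      inferInstance] ((B a i c d) ⁻¹' s) :=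
    ⟨s, MeasurableSpace.measurableSet_top, rfl⟩
  refine msMono le_sup_right (msMono ?_ h1)
  exact le_iSup₂ (f := fun q (_ : q ∈ {q : ℕ × ℕ × Fin N × Fin N | q.1 < k}) =>
    MeasurableSpace.comap (fun ω => B q.1 q.2.1 q.2.2.1 q.2.2.2 ω) inferInstance)
    (a, i, c, d) ha

/-- one-generation children list as a function of a single-generation table -/
def childList1 (N : ℕ) (b : ℕ → Fin N → Fin N → ℕ) (i : ℕ) (m : Fin N) : List (Fin N) :=
  ((List.finRange N).map fun j => List.replicate (b i m j) j).flatten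

def offsetAt1 (N : ℕ) (b : ℕ → Fin N → Fin N → ℕ) (g : List (Fin N)) (i : ℕ) : ℕ :=
  (((g.take i).zipIdx.map Prod.swap).map fun p => (childList1 N b p.1 p.2).length).sum

def nextFull (N : ℕ) (b : ℕ → Fin N → Fin N → ℕ) (g' : List (Fin N)) : List (Fin N) :=
  ((g'.zipIdx.map Prod.swap).map fun p => childList1 N b p.1 p.2).flatten

def nextPruned (N : ℕ) (b : ℕ → Fin N → Fin N → ℕ) (L : List (ℕ × Fin N))
    (T : Finset (Fin N)) (g' : List (Fin N)) : List (ℕ × Fin N) × Finset (Fin N) :=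
  processList N T ((L.map fun q => ((childList1 N b q.1 q.2).zipIdx.map Prod.swap).map fun c =>
    (offsetAt1 N b g' q.1 + c.1, c.2)).flatten)

lemma fullGen_succ' (b : ℕ → ℕ → Fin N → Fin N → ℕ) (r : Fin N) (k : ℕ) :
    fullGen N b r (k + 1) = nextFull N (b k) (fullGen N b r k) := rfl

lemma prunedState_succ' (b : ℕ → ℕ → Fin N → Fin N → ℕ) (r : Fin N) (k : ℕ) :
    prunedState N b r (k + 1) = nextPruned N (b k) (prunedState N b r k).1
      (prunedState N b r k).2 (fullGen N b r k) := rfl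

lemma enum_mem {α : Type*} {g' : List α} {p : ℕ × α} (hp : p ∈ g'.zipIdx.map Prod.swap) :
    ∃ h : p.1 < g'.length, g'[p.1] = p.2 := by
  have := mem_enum'.1 hp
  rw [List.getElem?_eq_some_iff] at this
  exact this

lemma childList1_congr {b b' : ℕ → Fin N → Fin N → ℕ} {i : ℕ} {m : Fin N}
    (h : ∀ j, b i m j = b' i m j) : childList1 N b i m = childList1 N b' i m := by
  unfold childList1
  congr 1
  exact List.map_congr_left fun j _ => by rw [h j]

lemma nextFull_congr {b b' : ℕ → Fin N → Fin N → ℕ} {g' : List (Fin N)}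
    (h : ∀ i (hi : i < g'.length) j, b i g'[i] j = b' i g'[i] j) :
    nextFull N b g' = nextFull N b' g' := by
  unfold nextFull
  congr 1
  refine List.map_congr_left fun p hp => ?_
  obtain ⟨h1, h2⟩ := enum_mem hp
  refine childList1_congr fun j => ?_
  rw [← h2]
  exact h p.1 h1 j

lemma offsetAt1_congr {b b' : ℕ → Fin N → Fin N → ℕ} {g' : List (Fin N)} {i : ℕ}
    (h : ∀ i' (hi : i' < g'.length) j, b i' g'[i'] j = b' i' g'[i'] j) :
    offsetAt1 N b g' i = offsetAt1 N b' g' i := by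
  unfold offsetAt1
  congr 1
  refine List.map_congr_left fun p hp => ?_
  obtain ⟨h1, h2⟩ := enum_mem hp
  have hlen : p.1 < g'.length := lt_of_lt_of_le h1 (by
    simpa using List.length_take_le i g')
  have h3 : g'[p.1] = p.2 := by
    rw [← h2]
    exact (List.getElem_take).symm
  rw [show (childList1 N b p.1 p.2) = childList1 N b' p.1 p.2 from
    childList1_congr fun j => by rw [← h3]; exact h p.1 hlen j]

lemma nextPruned_congr {b b' : ℕ → Fin N → Fin N → ℕ} {L : List (ℕ × Fin N)}
    {T : Finset (Fin N)} {g' : List (Fin N)}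
    (hL : ∀ q ∈ L, ∀ j, b q.1 q.2 j = b' q.1 q.2 j)
    (hg : ∀ i (hi : i < g'.length) j, b i g'[i] j = b' i g'[i] j) :
    nextPruned N b L T g' = nextPruned N b' L T g' := by
  unfold nextPruned
  congr 1
  congr 1
  refine List.map_congr_left fun q hq => ?_
  rw [childList1_congr (hL q hq), offsetAt1_congr hg]

lemma measFullGen (k : ℕ) (g : List (Fin N)) :
    MeasurableSet[mPastB B J0 k]
      {ω | fullGen N (fun a b c d => B a b c d ω) (J0 ω) k = g} := by
  induction k generalizing g with
  | zero =>
    have : {ω | fullGen N (fun a b c d => B a b c d ω) (J0 ω) 0 = g}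
        = J0 ⁻¹' {v | fullGen N (fun _ _ _ _ => 0) v 0 = g} := by
      ext ω
      simp only [Set.mem_setOf_eq, Set.mem_preimage]
      rfl
    rw [this]
    exact measJ0 B J0 0 _
  | succ k ih =>
    classical
    have hdec : {ω | fullGen N (fun a b c d => B a b c d ω) (J0 ω) (k+1) = g}
        = ⋃ g' : List (Fin N),
            {ω | fullGen N (fun a b c d => B a b c d ω) (J0 ω) k = g'} ∩
            {ω | nextFull N (fun i m j => B k i m j ω) g' = g} := by
      ext ω
      simp only [Set.mem_setOf_eq, Set.mem_iUnion, Set.mem_inter_iff]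
      constructor
      · intro h
        exact ⟨fullGen N (fun a b c d => B a b c d ω) (J0 ω) k, rfl, h⟩
      · rintro ⟨g', h1, h2⟩
        rw [fullGen_succ', h1]
        exact h2
    rw [hdec]
    refine MeasurableSet.iUnion fun g' => MeasurableSet.inter
      (msMono (mPastB_mono B J0 (Nat.le_succ k)) (ih g')) ?_
    have hset : {ω | nextFull N (fun i m j => B k i m j ω) g' = g}
        = {ω | (fun t : (Fin g'.length × Fin N) → ℕ => nextFull N
            (fun i m j => if h : i < g'.length then
              (if g'[i] = m then t (⟨i, h⟩, j) else 0) else 0) g')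
            (fun c => B k c.1.1 (g'[c.1.1]) c.2 ω) = g} := by
      ext ω
      simp only [Set.mem_setOf_eq]
      rw [show nextFull N (fun i m j => if h : i < g'.length then
            (if g'[i] = m then B k i (g'[(i : ℕ)]) j ω else 0) else 0) g'
          = nextFull N (fun i m j => B k i m j ω) g' from
        nextFull_congr fun i hi j => by simp [hi]]
    rw [hset]
    exact meas_dep (fun (c : Fin g'.length × Fin N) ω => B k c.1.1 (g'[(c.1.1 : ℕ)]) c.2 ω)
      (fun c t => measB B J0 k c.1.1 (g'[(c.1.1 : ℕ)]) c.2 (Nat.lt_succ_self k) {t})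
      (fun t : (Fin g'.length × Fin N) → ℕ => nextFull N
        (fun i m j => if h : i < g'.length then
          (if g'[i] = m then t (⟨i, h⟩, j) else 0) else 0) g') g

lemma measPruned (k : ℕ) (s : List (ℕ × Fin N) × Finset (Fin N)) :
    MeasurableSet[mPastB B J0 k]
      {ω | prunedState N (fun a b c d => B a b c d ω) (J0 ω) k = s} := by
  induction k generalizing s with
  | zero =>
    have : {ω | prunedState N (fun a b c d => B a b c d ω) (J0 ω) 0 = s}
        = J0 ⁻¹' {v | (([(0, v)], {v}) : List (ℕ × Fin N) × Finset (Fin N)) = s} := by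
      ext ω
      simp only [Set.mem_setOf_eq, Set.mem_preimage]
      rfl
    rw [this]
    exact measJ0 B J0 0 _
  | succ k ih =>
    classical
    have hdec : {ω | prunedState N (fun a b c d => B a b c d ω) (J0 ω) (k+1) = s}
        = ⋃ (LT : List (ℕ × Fin N) × Finset (Fin N)) (g' : List (Fin N)),
            {ω | prunedState N (fun a b c d => B a b c d ω) (J0 ω) k = LT} ∩
            ({ω | fullGen N (fun a b c d => B a b c d ω) (J0 ω) k = g'} ∩
             {ω | nextPruned N (fun i m j => B k i m j ω) LT.1 LT.2 g' = s}) := by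
      ext ω
      simp only [Set.mem_setOf_eq, Set.mem_iUnion, Set.mem_inter_iff]
      constructor
      · intro h
        exact ⟨prunedState N (fun a b c d => B a b c d ω) (J0 ω) k,
          fullGen N (fun a b c d => B a b c d ω) (J0 ω) k, rfl, rfl, h⟩
      · rintro ⟨LT, g', h1, h2, h3⟩
        rw [prunedState_succ', h1, h2]
        exact h3
    rw [hdec]
    refine MeasurableSet.iUnion fun LT => MeasurableSet.iUnion fun g' =>
      MeasurableSet.inter (msMono (mPastB_mono B J0 (Nat.le_succ k)) (ih LT)) ?_
    refine MeasurableSet.inter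
      (msMono (mPastB_mono B J0 (Nat.le_succ k)) (measFullGen B J0 k g')) ?_
    set γ := (Fin LT.1.length × Fin N) ⊕ (Fin g'.length × Fin N) with hγ
    set X : γ → Ω → ℕ := fun c => match c with
      | Sum.inl (i, j) => fun ω => B k (LT.1.get i).1 (LT.1.get i).2 j ω
      | Sum.inr (i, j) => fun ω => B k i.1 (g'[(i : Fin g'.length)]) j ω with hX
    set brec : (γ → ℕ) → ℕ → Fin N → Fin N → ℕ := fun t i m j =>
      if h : ∃ i' : Fin LT.1.length, (LT.1.get i').1 = i ∧ (LT.1.get i').2 = m then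
        t (Sum.inl (h.choose, j))
      else if h2 : i < g'.length then
        (if g'[i] = m then t (Sum.inr (⟨i, h2⟩, j)) else 0)
      else 0 with hbrec
    have hagree : ∀ ω,
        nextPruned N (brec (fun c => X c ω)) LT.1 LT.2 g'
          = nextPruned N (fun i m j => B k i m j ω) LT.1 LT.2 g' := by
      intro ω
      refine nextPruned_congr ?_ ?_
      · intro q hq j
        obtain ⟨i', hi'⟩ := List.mem_iff_get.1 hq
        have hex : ∃ i'' : Fin LT.1.length, (LT.1.get i'').1 = q.1 ∧ (LT.1.get i'').2 = q.2 :=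
          ⟨i', by rw [hi'], by rw [hi']⟩
        simp only [hbrec, dif_pos hex]
        have hch := hex.choose_spec
        simp only [hX]
        rw [hch.1, hch.2]
      · intro i hi j
        by_cases hex : ∃ i'' : Fin LT.1.length, (LT.1.get i'').1 = i ∧ (LT.1.get i'').2 = g'[i]
        · simp only [hbrec, dif_pos hex]
          have hch := hex.choose_spec
          simp only [hX]
          rw [hch.1, hch.2]
        · simp only [hbrec, dif_neg hex, dif_pos hi]
          simp [hX]
    have hset : {ω | nextPruned N (fun i m j => B k i m j ω) LT.1 LT.2 g' = s}
        = {ω | (fun t : γ → ℕ => nextPruned N (brec t) LT.1 LT.2 g')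
            (fun c => X c ω) = s} := by
      ext ω
      simp only [Set.mem_setOf_eq]
      rw [hagree ω]
    rw [hset]
    refine meas_dep X (fun c t => ?_) (fun t : γ → ℕ => nextPruned N (brec t) LT.1 LT.2 g') s
    match c with
    | Sum.inl (i, j) =>
      exact measB B J0 k (LT.1.get i).1 (LT.1.get i).2 j (Nat.lt_succ_self k) {t}
    | Sum.inr (i, j) =>
      exact measB B J0 k i.1 (g'[(i : Fin g'.length)]) j (Nat.lt_succ_self k) {t}

end Meas
section Main

variable {Ω : Type} [mΩ : MeasurableSpace Ω] {N : ℕ}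

def TsetA (A : ℕ → Set (Fin N)) (k : ℕ) : Set (Fin N) := {j | ∃ k' ≤ k, j ∈ A k'}

def SFA (A : ℕ → Set (Fin N)) (k : ℕ) : Finset (Fin N) := (A k).toFinite.toFinset

def TFA (A : ℕ → Set (Fin N)) (k : ℕ) : Finset (Fin N) := (TsetA A k).toFinite.toFinset

lemma TsetA_mono (A : ℕ → Set (Fin N)) {k k' : ℕ} (h : k ≤ k') :
    TsetA A k ⊆ TsetA A k' := by
  rintro x ⟨k'', hk'', hx⟩
  exact ⟨k'', le_trans hk'' h, hx⟩

lemma A_subset_TsetA (A : ℕ → Set (Fin N)) (k : ℕ) : A k ⊆ TsetA A k :=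
  fun x hx => ⟨k, le_refl k, hx⟩

variable (μ : Measure Ω) [IsProbabilityMeasure μ] (l : Fin N → ℝ)
  (B : ℕ → ℕ → Fin N → Fin N → Ω → ℕ)
  (hB_meas : ∀ n i m j, Measurable (B n i m j))
  (hB_indep : iIndepFun
    (fun q : ℕ × ℕ × Fin N × Fin N => B q.1 q.2.1 q.2.2.1 q.2.2.2) μ)
  (hB_poisson : ∀ n i m j, μ.map (B n i m j) =
    poissonMeasure (Real.toNNReal (l m * l j / ∑ k, l k)))
  (J0 : Ω → Fin N) (hJ0_meas : Measurable J0)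
  (hJ0_indep : IndepFun J0
    (fun ω (q : ℕ × ℕ × Fin N × Fin N) => B q.1 q.2.1 q.2.2.1 q.2.2.2 ω) μ)
  (A : ℕ → Set (Fin N))

/-- The branching-side cylinder event. -/
def EBset (A : ℕ → Set (Fin N)) (B : ℕ → ℕ → Fin N → Fin N → Ω → ℕ) (J0 : Ω → Fin N)
    (n : ℕ) : Set Ω :=
  {ω | ∀ k ≤ n, prunedMarks N (fun a b c d => B a b c d ω) (J0 ω) k = A k}

lemma measEB (n : ℕ) : MeasurableSet[mPastB B J0 n] (EBset A B J0 n) := by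
  have : EBset A B J0 n = ⋂ k ∈ Set.Iic n,
      {ω | prunedMarks N (fun a b c d => B a b c d ω) (J0 ω) k = A k} := by
    ext ω; simp [EBset, Set.mem_iInter]
  rw [this]
  refine MeasurableSet.biInter (Set.to_countable _) fun k hk => ?_
  have hk' : k ≤ n := hk
  have : {ω | prunedMarks N (fun a b c d => B a b c d ω) (J0 ω) k = A k}
      = ⋃ (s : List (ℕ × Fin N) × Finset (Fin N))
          (_ : {j | ∃ q ∈ s.1, q.2 = j} = A k),
          {ω | prunedState N (fun a b c d => B a b c d ω) (J0 ω) k = s} := by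
    ext ω
    simp only [Set.mem_setOf_eq, Set.mem_iUnion]
    constructor
    · intro h
      exact ⟨prunedState N (fun a b c d => B a b c d ω) (J0 ω) k, h, rfl⟩
    · rintro ⟨s, hs, h⟩
      rw [show prunedMarks N (fun a b c d => B a b c d ω) (J0 ω) k
        = {j | ∃ q ∈ (prunedState N (fun a b c d => B a b c d ω) (J0 ω) k).1, q.2 = j}
        from rfl, h]
      exact hs
  rw [this]
  exact MeasurableSet.iUnion fun s => MeasurableSet.iUnion fun _ =>
    msMono (mPastB_mono B J0 hk') (measPruned B J0 k s)

include hB_meas hJ0_meas in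
lemma measEB_amb (n : ℕ) : MeasurableSet (EBset A B J0 n) :=
  msMono (mPastB_le B J0 hB_meas hJ0_meas n) (measEB B J0 A n)

include hB_meas hB_indep hB_poisson hJ0_meas hJ0_indep in
lemma branch_step (k : ℕ) :
    μ (EBset A B J0 (k + 1))
      = μ (EBset A B J0 k) * stepWeight l (SFA A k) (TFA A k) (SFA A (k + 1)) := by
  classical
  set F : ℕ × ℕ × Fin N × Fin N → Ω → ℕ :=
    fun q => B q.1 q.2.1 q.2.2.1 q.2.2.2 with hF
  set PS : Ω → ℕ → List (ℕ × Fin N) × Finset (Fin N) :=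
    fun ω => prunedState N (fun a b c d => B a b c d ω) (J0 ω) with hPS
  set PM : Ω → ℕ → Set (Fin N) :=
    fun ω => prunedMarks N (fun a b c d => B a b c d ω) (J0 ω) with hPM
  set Dk : List (ℕ × Fin N) × Finset (Fin N) → Set Ω :=
    fun LT => EBset A B J0 k ∩ {ω | PS ω k = LT} with hDk
  set StepSet : List (ℕ × Fin N) × Finset (Fin N) → Set Ω := fun LT =>
    {ω | ∀ j : Fin N, (j ∈ SFA A (k+1) ↔ (j ∉ TFA A k ∧
      ∃ m ∈ SFA A k, F (k, posIn LT.1 m, m, j) ω ≠ 0))} with hSS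
  -- the key pointwise step characterization
  have hiff : ∀ ω, (∀ k' ≤ k, PM ω k' = A k') →
      (PM ω (k+1) = A (k+1) ↔ ω ∈ StepSet (PS ω k)) := by
    intro ω hω
    have hmarks : {m | ∃ q ∈ (PS ω k).1, q.2 = m} = A k := hω k (le_refl k)
    have hsnd : ((PS ω k).2 : Set (Fin N)) = TsetA A k := by
      rw [hPS]
      rw [prunedState_snd]
      ext m
      simp only [Set.mem_setOf_eq, TsetA]
      constructor
      · rintro ⟨k', hk', hm⟩
        have hm' : m ∈ PM ω k' := hm
        rw [hω k' hk'] at hm'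
        exact ⟨k', hk', hm'⟩
      · rintro ⟨k', hk', hm⟩
        refine ⟨k', hk', ?_⟩
        show m ∈ PM ω k'
        rw [hω k' hk']
        exact hm
    have hnodup := prunedState_nodup (fun a b c d => B a b c d ω) (J0 ω) k
    have hsucc : PM ω (k+1)
        = {j | ∃ q ∈ (PS ω k).1, B k q.1 q.2 j ω ≠ 0} \ ((PS ω k).2 : Set (Fin N)) :=
      prunedMarks_succ _ _ k
    have hEx : ∀ j : Fin N, (∃ q ∈ (PS ω k).1, B k q.1 q.2 j ω ≠ 0)
        ↔ (∃ m ∈ SFA A k, F (k, posIn (PS ω k).1 m, m, j) ω ≠ 0) := by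
      intro j
      constructor
      · rintro ⟨q, hq, hB⟩
        refine ⟨q.2, ?_, ?_⟩
        · rw [SFA, Set.Finite.mem_toFinset, ← hmarks]
          exact ⟨q, hq, rfl⟩
        · rw [hF]
          simp only
          rw [posIn_eq _ hnodup q hq]
          exact hB
      · rintro ⟨m, hm, hB⟩
        rw [SFA, Set.Finite.mem_toFinset, ← hmarks] at hm
        obtain ⟨q, hq, rfl⟩ := hm
        refine ⟨q, hq, ?_⟩
        rw [hF] at hB
        simp only at hB
        rwa [posIn_eq _ hnodup q hq] at hB
    constructor
    · intro hnext
      intro j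
      rw [SFA, Set.Finite.mem_toFinset, TFA, Set.Finite.mem_toFinset, ← hEx j]
      rw [← hnext, hsucc, hsnd]
      constructor
      · rintro ⟨h1, h2⟩
        exact ⟨h2, h1⟩
      · rintro ⟨h1, h2⟩
        exact ⟨h2, h1⟩
    · intro hstep
      rw [hsucc, hsnd]
      ext j
      have := hstep j
      rw [SFA, Set.Finite.mem_toFinset, TFA, Set.Finite.mem_toFinset, ← hEx j] at this
      simp only [Set.mem_diff, Set.mem_setOf_eq]
      rw [this]
      tauto
  -- decomposition of the event
  have hdecomp : EBset A B J0 (k+1) = ⋃ LT, (Dk LT ∩ StepSet LT) := by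
    ext ω
    simp only [Set.mem_iUnion, hDk, Set.mem_inter_iff, Set.mem_setOf_eq]
    constructor
    · intro h
      have hk : ∀ k' ≤ k, PM ω k' = A k' := fun k' hk' => h k' (le_trans hk' (Nat.le_succ k))
      refine ⟨PS ω k, ⟨⟨fun k' hk' => hk k' hk', rfl⟩, ?_⟩⟩
      exact (hiff ω hk).1 (h (k+1) (le_refl _))
    · rintro ⟨LT, ⟨⟨hEBk, hPSk⟩, hstep⟩⟩
      intro k' hk'
      rcases Nat.lt_or_ge k' (k+1) with hlt | hge
      · exact hEBk k' (Nat.lt_succ_iff.1 hlt)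
      · have : k' = k + 1 := le_antisymm hk' hge
        subst this
        refine (hiff ω hEBk).2 ?_
        rw [hPSk]
        exact hstep
  -- measurability of pieces
  have hDkm : ∀ LT, MeasurableSet (Dk LT) := by
    intro LT
    refine (measEB_amb B hB_meas J0 hJ0_meas A k).inter ?_
    exact msMono (mPastB_le B J0 hB_meas hJ0_meas k) (measPruned B J0 k LT)
  have hSSm : ∀ LT, MeasurableSet (StepSet LT) := by
    intro LT
    have hSSeq : StepSet LT = ⋂ j : Fin N, {ω | (j ∈ SFA A (k+1) ↔ (j ∉ TFA A k ∧
        ∃ m ∈ SFA A k, F (k, posIn LT.1 m, m, j) ω ≠ 0))} := by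
      ext ω; simp only [hSS, Set.mem_iInter, Set.mem_setOf_eq]
    rw [hSSeq]
    refine MeasurableSet.iInter fun j => ?_
    have hset : {ω | ∃ m ∈ SFA A k, F (k, posIn LT.1 m, m, j) ω ≠ 0}
        = ⋃ m ∈ SFA A k, (F (k, posIn LT.1 m, m, j)) ⁻¹' ({0}ᶜ) := by
      ext ω; simp [hF]
    by_cases hU : j ∈ SFA A (k+1) <;> by_cases hT : j ∈ TFA A k
    · have : {ω | j ∈ SFA A (k+1) ↔ (j ∉ TFA A k ∧
          ∃ m ∈ SFA A k, F (k, posIn LT.1 m, m, j) ω ≠ 0)} = ∅ := by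
        ext ω; simp [hU, hT]
      rw [this]; exact MeasurableSet.empty
    · have : {ω | j ∈ SFA A (k+1) ↔ (j ∉ TFA A k ∧
          ∃ m ∈ SFA A k, F (k, posIn LT.1 m, m, j) ω ≠ 0)}
          = {ω | ∃ m ∈ SFA A k, F (k, posIn LT.1 m, m, j) ω ≠ 0} := by
        ext ω; simp [hU, hT]
      rw [this, hset]
      exact MeasurableSet.biUnion (Finset.countable_toSet _)
        fun m _ => (hB_meas _ _ _ _) (measurableSet_singleton 0).compl
    · have : {ω | j ∈ SFA A (k+1) ↔ (j ∉ TFA A k ∧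
          ∃ m ∈ SFA A k, F (k, posIn LT.1 m, m, j) ω ≠ 0)} = Set.univ := by
        ext ω; simp [hU, hT]
      rw [this]; exact MeasurableSet.univ
    · have : {ω | j ∈ SFA A (k+1) ↔ (j ∉ TFA A k ∧
          ∃ m ∈ SFA A k, F (k, posIn LT.1 m, m, j) ω ≠ 0)}
          = ({ω | ∃ m ∈ SFA A k, F (k, posIn LT.1 m, m, j) ω ≠ 0})ᶜ := by
        ext ω; simp [hU, hT]
      rw [this, hset]
      exact (MeasurableSet.biUnion (Finset.countable_toSet _)
        fun m _ => (hB_meas _ _ _ _) (measurableSet_singleton 0).compl).compl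
  -- each piece factorizes
  have hpiece : ∀ LT, μ (Dk LT ∩ StepSet LT)
      = μ (Dk LT) * stepWeight l (SFA A k) (TFA A k) (SFA A (k+1)) := by
    intro LT
    have hJoin := indep_join F (fun q => hB_meas _ _ _ _) hB_indep J0 hJ0_meas hJ0_indep
      {q : ℕ × ℕ × Fin N × Fin N | q.1 = k}
    refine step_prob μ l F (fun q => hB_meas _ _ _ _) hB_indep
      (SFA A k) (TFA A k) (SFA A (k+1))
      (fun m j => (k, posIn LT.1 m, m, j)) ?_ ?_ (Dk LT) (hDkm LT) ?_
    · intro m m' j j' _ _ _ _ h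
      rw [Prod.ext_iff] at h
      obtain ⟨-, h2⟩ := h
      rw [Prod.ext_iff] at h2
      obtain ⟨-, h3⟩ := h2
      rw [Prod.ext_iff] at h3
      exact ⟨h3.1, h3.2⟩
    · intro m _ j _
      rw [show F (k, posIn LT.1 m, m, j) = B k (posIn LT.1 m) m j from rfl]
      rw [show (F (k, posIn LT.1 m, m, j)) ⁻¹' {0}
        = B k (posIn LT.1 m) m j ⁻¹' {0} from rfl]
      rw [← Measure.map_apply (hB_meas _ _ _ _) (measurableSet_singleton 0)]
      rw [hB_poisson]
      rfl
    · intro G hG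
      have hDside : MeasurableSet[MeasurableSpace.comap J0 inferInstance ⊔
          ⨆ q ∈ ({q : ℕ × ℕ × Fin N × Fin N | q.1 = k})ᶜ,
            MeasurableSpace.comap (F q) inferInstance] (Dk LT) := by
        refine msMono ?_ ((measEB B J0 A k).inter (measPruned B J0 k LT))
        refine sup_le le_sup_left ?_
        refine iSup₂_le fun q hq => ?_
        refine le_trans ?_ le_sup_right
        exact le_iSup₂ (f := fun q (_ : q ∈ ({q : ℕ × ℕ × Fin N × Fin N | q.1 = k})ᶜ) =>
          MeasurableSpace.comap (F q) inferInstance) q (by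
            simp only [Set.mem_compl_iff, Set.mem_setOf_eq]
            exact Nat.ne_of_lt hq)
      have hGside : MeasurableSet[⨆ q ∈ {q : ℕ × ℕ × Fin N × Fin N | q.1 = k},
          MeasurableSpace.comap (F q) inferInstance] G := by
        refine msMono ?_ hG
        refine iSup₂_le fun p hp => ?_
        exact le_iSup₂ (f := fun q (_ : q ∈ {q : ℕ × ℕ × Fin N × Fin N | q.1 = k}) =>
          MeasurableSpace.comap (F q) inferInstance) (k, posIn LT.1 p.1, p.1, p.2) rfl
      exact (Indep_iff _ _ _).1 hJoin (Dk LT) G hDside hGside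
  -- sum up
  have hdisjU : Pairwise (Function.onFun Disjoint (fun LT => Dk LT ∩ StepSet LT)) := by
    intro LT LT' hne
    refine Set.disjoint_left.2 ?_
    rintro ω ⟨⟨_, h1⟩, _⟩ ⟨⟨_, h2⟩, _⟩
    exact hne (h1 ▸ h2 ▸ rfl)
  rw [hdecomp, measure_iUnion hdisjU (fun LT => (hDkm LT).inter (hSSm LT))]
  have : ∀ LT, μ (Dk LT ∩ StepSet LT)
      = μ (Dk LT) * stepWeight l (SFA A k) (TFA A k) (SFA A (k+1)) := hpiece
  rw [tsum_congr this, ENNReal.tsum_mul_right]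
  congr 1
  have hDdisj : Pairwise (Function.onFun Disjoint Dk) := by
    intro LT LT' hne
    refine Set.disjoint_left.2 ?_
    rintro ω ⟨_, h1⟩ ⟨_, h2⟩
    exact hne (h1 ▸ h2 ▸ rfl)
  rw [← measure_iUnion hDdisj hDkm]
  congr 1
  ext ω
  simp only [Set.mem_iUnion, hDk, Set.mem_inter_iff, Set.mem_setOf_eq]
  constructor
  · rintro ⟨LT, hEB, _⟩
    exact hEB
  · intro h
    exact ⟨PS ω k, h, rfl⟩

end Main
section Graph

variable {Ω : Type} [mΩ : MeasurableSpace Ω] {N : ℕ}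

def EGset (A : ℕ → Set (Fin N)) (E : Sym2 (Fin N) → Ω → ℕ) (i0 : Ω → Fin N)
    (n : ℕ) : Set Ω :=
  {ω | ∀ k ≤ n, shells N (graphOf fun e => E e ω) (i0 ω) k = A k}

def FreshG (A : ℕ → Set (Fin N)) (k : ℕ) : Set (Sym2 (Fin N)) :=
  {e | ∃ m ∈ A k, ∃ j, j ∉ TsetA A k ∧ e = s(m, j)}

def ExamSet (A : ℕ → Set (Fin N)) (k : ℕ) : Set (Sym2 (Fin N)) :=
  {e | ∃ k' < k, e ∈ FreshG A k'}

def mPastG (E : Sym2 (Fin N) → Ω → ℕ) (i0 : Ω → Fin N) (A : ℕ → Set (Fin N))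
    (k : ℕ) : MeasurableSpace Ω :=
  MeasurableSpace.comap i0 inferInstance ⊔
    ⨆ e ∈ ExamSet A k, MeasurableSpace.comap (E e) inferInstance

def StepSetG (A : ℕ → Set (Fin N)) (E : Sym2 (Fin N) → Ω → ℕ) (k : ℕ) : Set Ω :=
  {ω | ∀ j : Fin N, (j ∈ SFA A (k+1) ↔ (j ∉ TFA A k ∧
    ∃ m ∈ SFA A k, E s(m, j) ω ≠ 0))}

variable (μ : Measure Ω) [IsProbabilityMeasure μ] (l : Fin N → ℝ)
  (E : Sym2 (Fin N) → Ω → ℕ)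
  (hE_meas : ∀ e, Measurable (E e))
  (hE_indep : iIndepFun E μ)
  (hE_poisson : ∀ e, μ.map (E e) = poissonMeasure (edgeRate l e))
  (i0 : Ω → Fin N) (hi0_meas : Measurable i0)
  (hi0_indep : IndepFun i0 (fun ω e => E e ω) μ)
  (A : ℕ → Set (Fin N))

lemma mPastG_mono {k k' : ℕ} (h : k ≤ k') : mPastG E i0 A k ≤ mPastG E i0 A k' := by
  refine sup_le_sup_left ?_ _
  refine iSup₂_le fun e he => ?_
  obtain ⟨k'', hk'', hf⟩ := he
  exact le_iSup₂ (f := fun e (_ : e ∈ ExamSet A k') =>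
    MeasurableSpace.comap (E e) inferInstance) e ⟨k'', lt_of_lt_of_le hk'' h, hf⟩

include hE_meas hi0_meas in
lemma mPastG_le (k : ℕ) : mPastG E i0 A k ≤ mΩ :=
  sup_le hi0_meas.comap_le (iSup₂_le fun e _ => (hE_meas e).comap_le)

/-- Pointwise characterization of the graph exploration step. -/
lemma hiffG (k : ℕ) (ω : Ω)
    (hω : ∀ k' ≤ k, shells N (graphOf fun e => E e ω) (i0 ω) k' = A k') :
    (shells N (graphOf fun e => E e ω) (i0 ω) (k+1) = A (k+1)
      ↔ ω ∈ StepSetG A E k) := by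
  set G := graphOf fun e => E e ω with hG
  have hTs : {m | ∃ k' ≤ k, m ∈ shells N G (i0 ω) k'} = TsetA A k := by
    ext m
    simp only [Set.mem_setOf_eq, TsetA]
    constructor
    · rintro ⟨k', hk', hm⟩
      rw [hω k' hk'] at hm
      exact ⟨k', hk', hm⟩
    · rintro ⟨k', hk', hm⟩
      refine ⟨k', hk', ?_⟩
      rw [hω k' hk']
      exact hm
  have hsucc := shells_succ G (i0 ω) k
  rw [hTs, hω k (le_refl k)] at hsucc
  have hAdj : ∀ (m j : Fin N), m ∈ A k → j ∉ TsetA A k →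
      (G.Adj m j ↔ E s(m, j) ω ≠ 0) := by
    intro m j hm hj
    have hmj : m ≠ j := by
      intro h
      exact hj (h ▸ A_subset_TsetA A k hm)
    rw [hG]
    constructor
    · rintro ⟨-, h2⟩
      exact Nat.one_le_iff_ne_zero.1 h2
    · intro h
      exact ⟨hmj, Nat.one_le_iff_ne_zero.2 h⟩
  constructor
  · intro hnext j
    rw [SFA, Set.Finite.mem_toFinset, TFA, Set.Finite.mem_toFinset, ← hnext, hsucc]
    simp only [Set.mem_setOf_eq]
    constructor
    · rintro ⟨h1, i, hi, hadj⟩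
      refine ⟨h1, i, ?_, (hAdj i j hi h1).1 hadj⟩
      rw [SFA, Set.Finite.mem_toFinset]
      exact hi
    · rintro ⟨h1, m, hm, hE0⟩
      rw [SFA, Set.Finite.mem_toFinset] at hm
      exact ⟨h1, m, hm, (hAdj m j hm h1).2 hE0⟩
  · intro hstep
    rw [hsucc]
    ext j
    simp only [Set.mem_setOf_eq]
    constructor
    · rintro ⟨h1, m, hm, hadj⟩
      have h2 : j ∈ SFA A (k+1) := by
        refine (hstep j).2 ⟨?_, m, ?_, (hAdj m j hm h1).1 hadj⟩
        · rw [TFA, Set.Finite.mem_toFinset]; exact h1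
        · rw [SFA, Set.Finite.mem_toFinset]; exact hm
      rwa [SFA, Set.Finite.mem_toFinset] at h2
    · intro h
      have h2 := (hstep j).1 (by rw [SFA, Set.Finite.mem_toFinset]; exact h)
      obtain ⟨h1, m, hm, hE0⟩ := h2
      rw [TFA, Set.Finite.mem_toFinset] at h1
      rw [SFA, Set.Finite.mem_toFinset] at hm
      exact ⟨h1, m, hm, (hAdj m j hm h1).2 hE0⟩

lemma EG_step_eq (k : ℕ) :
    EGset A E i0 (k+1) = EGset A E i0 k ∩ StepSetG A E k := by
  ext ω
  simp only [EGset, Set.mem_setOf_eq, Set.mem_inter_iff]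
  constructor
  · intro h
    have hk : ∀ k' ≤ k, shells N (graphOf fun e => E e ω) (i0 ω) k' = A k' :=
      fun k' hk' => h k' (le_trans hk' (Nat.le_succ k))
    exact ⟨hk, (hiffG E i0 A k ω hk).1 (h (k+1) (le_refl _))⟩
  · rintro ⟨h1, h2⟩
    intro k' hk'
    rcases Nat.lt_or_ge k' (k+1) with hlt | hge
    · exact h1 k' (Nat.lt_succ_iff.1 hlt)
    · have : k' = k + 1 := le_antisymm hk' hge
      subst this
      exact (hiffG E i0 A k ω h1).2 h2

lemma measStepSetG (k : ℕ) :
    MeasurableSet[⨆ e ∈ FreshG A k, MeasurableSpace.comap (E e) inferInstance]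
      (StepSetG A E k) := by
  classical
  have hSSeq : StepSetG A E k = ⋂ j : Fin N, {ω | (j ∈ SFA A (k+1) ↔ (j ∉ TFA A k ∧
      ∃ m ∈ SFA A k, E s(m, j) ω ≠ 0))} := by
    ext ω; simp only [StepSetG, Set.mem_iInter, Set.mem_setOf_eq]
  rw [hSSeq]
  refine MeasurableSet.iInter fun j => ?_
  have hatom : ∀ m ∈ SFA A k, j ∉ TFA A k →
      MeasurableSet[⨆ e ∈ FreshG A k, MeasurableSpace.comap (E e) inferInstance]
        ((E s(m, j)) ⁻¹' ({0}ᶜ)) := by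
    intro m hm hj
    have hmem : s(m, j) ∈ FreshG A k := by
      refine ⟨m, ?_, j, ?_, rfl⟩
      · rwa [SFA, Set.Finite.mem_toFinset] at hm
      · rwa [TFA, Set.Finite.mem_toFinset] at hj
    have h1 : MeasurableSet[MeasurableSpace.comap (E s(m, j)) inferInstance]
        ((E s(m, j)) ⁻¹' ({0}ᶜ)) := ⟨{0}ᶜ, (measurableSet_singleton 0).compl, rfl⟩
    exact msMono (le_iSup₂ (f := fun e (_ : e ∈ FreshG A k) =>
      MeasurableSpace.comap (E e) inferInstance) s(m, j) hmem) h1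
  have hset : j ∉ TFA A k → MeasurableSet[⨆ e ∈ FreshG A k,
      MeasurableSpace.comap (E e) inferInstance]
      {ω | ∃ m ∈ SFA A k, E s(m, j) ω ≠ 0} := by
    intro hj
    have : {ω | ∃ m ∈ SFA A k, E s(m, j) ω ≠ 0}
        = ⋃ m ∈ SFA A k, (E s(m, j)) ⁻¹' ({0}ᶜ) := by
      ext ω; simp
    rw [this]
    exact MeasurableSet.biUnion (Finset.countable_toSet _) fun m hm => hatom m hm hj
  by_cases hU : j ∈ SFA A (k+1) <;> by_cases hT : j ∈ TFA A k
  · have : {ω | j ∈ SFA A (k+1) ↔ (j ∉ TFA A k ∧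
        ∃ m ∈ SFA A k, E s(m, j) ω ≠ 0)} = ∅ := by ext ω; simp [hU, hT]
    rw [this]
    exact @MeasurableSet.empty Ω (⨆ e ∈ FreshG A k, MeasurableSpace.comap (E e) inferInstance)
  · have : {ω | j ∈ SFA A (k+1) ↔ (j ∉ TFA A k ∧
        ∃ m ∈ SFA A k, E s(m, j) ω ≠ 0)}
        = {ω | ∃ m ∈ SFA A k, E s(m, j) ω ≠ 0} := by ext ω; simp [hU, hT]
    rw [this]; exact hset hT
  · have : {ω | j ∈ SFA A (k+1) ↔ (j ∉ TFA A k ∧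
        ∃ m ∈ SFA A k, E s(m, j) ω ≠ 0)} = Set.univ := by ext ω; simp [hU, hT]
    rw [this]
    exact @MeasurableSet.univ Ω (⨆ e ∈ FreshG A k, MeasurableSpace.comap (E e) inferInstance)
  · have : {ω | j ∈ SFA A (k+1) ↔ (j ∉ TFA A k ∧
        ∃ m ∈ SFA A k, E s(m, j) ω ≠ 0)}
        = ({ω | ∃ m ∈ SFA A k, E s(m, j) ω ≠ 0})ᶜ := by ext ω; simp [hU, hT]
    rw [this]; exact (hset hT).compl

lemma measEG (k : ℕ) : MeasurableSet[mPastG E i0 A k] (EGset A E i0 k) := by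
  induction k with
  | zero =>
    have : EGset A E i0 0 = i0 ⁻¹' {v | ({v} : Set (Fin N)) = A 0} := by
      ext ω
      simp only [EGset, Set.mem_setOf_eq, Set.mem_preimage, Nat.le_zero]
      constructor
      · intro h
        exact h 0 rfl
      · intro h k hk
        subst hk
        exact h
    rw [this]
    exact msMono le_sup_left ⟨_, (Set.toFinite _).measurableSet, rfl⟩
  | succ k ih =>
    rw [EG_step_eq E i0 A k]
    refine MeasurableSet.inter (msMono (mPastG_mono E i0 A (Nat.le_succ k)) ih) ?_
    refine msMono ?_ (measStepSetG E A k)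
    refine le_trans ?_ le_sup_right
    refine iSup₂_le fun e he => ?_
    exact le_iSup₂ (f := fun e (_ : e ∈ ExamSet A (k+1)) =>
      MeasurableSpace.comap (E e) inferInstance) e ⟨k, Nat.lt_succ_self k, he⟩

lemma Exam_notin_Fresh (k : ℕ)
    (hdisj : ∀ k' < k, ∀ x ∈ A (k'+1), x ∉ TsetA A k') :
    ∀ e ∈ ExamSet A k, e ∉ FreshG A k := by
  rintro e ⟨k', hk', m, hm, j, hj, rfl⟩ ⟨m2, hm2, j2, hj2, heq⟩
  rw [Sym2.eq_iff] at heq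
  rcases heq with ⟨rfl, rfl⟩ | ⟨rfl, rfl⟩
  · -- same orientation : m ∈ A k' and m ∈ A k with k' < k
    obtain ⟨k'', rfl⟩ : ∃ k'', k = k'' + 1 := ⟨k - 1, by omega⟩
    refine hdisj k'' (Nat.lt_succ_self k'') m hm2 ?_
    exact ⟨k', by omega, hm⟩
  · -- crossed : j2 = m ∈ A k', but j2 ∉ TsetA A k ⊇ TsetA A k'
    exact hj2 (TsetA_mono A (le_of_lt hk') (A_subset_TsetA A k' hm))

include hE_meas hE_indep hE_poisson hi0_meas hi0_indep in
lemma graph_step (k : ℕ)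
    (hdisj : ∀ k' < k, ∀ x ∈ A (k'+1), x ∉ TsetA A k') :
    μ (EGset A E i0 (k + 1))
      = μ (EGset A E i0 k) * stepWeight l (SFA A k) (TFA A k) (SFA A (k + 1)) := by
  classical
  rw [EG_step_eq E i0 A k]
  have hJoin := indep_join E hE_meas hE_indep i0 hi0_meas hi0_indep (FreshG A k)
  have hres := step_prob μ l E hE_meas hE_indep (SFA A k) (TFA A k) (SFA A (k+1))
    (fun m j => s(m, j)) ?_ ?_ (EGset A E i0 k)
    (msMono (mPastG_le E hE_meas i0 hi0_meas A k) (measEG E i0 A k)) ?_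
  · exact hres
  · -- key injectivity
    intro m m' j j' hm hm' hj hj' h
    rw [Sym2.eq_iff] at h
    rcases h with ⟨h1, h2⟩ | ⟨h1, h2⟩
    · exact ⟨h1, h2⟩
    · exfalso
      apply hj'
      rw [TFA, Set.Finite.mem_toFinset]
      subst h1
      refine A_subset_TsetA A k ?_
      rwa [SFA, Set.Finite.mem_toFinset] at hm
  · -- rates
    intro m hm j hj
    rw [← Measure.map_apply (hE_meas _) (measurableSet_singleton 0), hE_poisson, eZ]
    exact congrArg (fun r => poissonMeasure r {0}) (Sym2.lift_mk _ m j)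
  · -- independence
    intro G hG
    have hDside : MeasurableSet[MeasurableSpace.comap i0 inferInstance ⊔
        ⨆ e ∈ (FreshG A k)ᶜ, MeasurableSpace.comap (E e) inferInstance]
        (EGset A E i0 k) := by
      refine msMono ?_ (measEG E i0 A k)
      refine sup_le le_sup_left ?_
      refine iSup₂_le fun e he => ?_
      refine le_trans ?_ le_sup_right
      exact le_iSup₂ (f := fun e (_ : e ∈ (FreshG A k)ᶜ) =>
        MeasurableSpace.comap (E e) inferInstance) e
        (Exam_notin_Fresh A k hdisj e he)
    have hGside : MeasurableSet[⨆ e ∈ FreshG A k,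
        MeasurableSpace.comap (E e) inferInstance] G := by
      refine msMono ?_ hG
      refine iSup₂_le fun p hp => ?_
      rw [Finset.mem_product] at hp
      refine le_iSup₂ (f := fun e (_ : e ∈ FreshG A k) =>
        MeasurableSpace.comap (E e) inferInstance) s(p.1, p.2) ?_
      refine ⟨p.1, ?_, p.2, ?_, rfl⟩
      · have := hp.1
        rwa [SFA, Set.Finite.mem_toFinset] at this
      · have := Finset.mem_compl.1 hp.2
        rwa [TFA, Set.Finite.mem_toFinset] at this
    exact (Indep_iff _ _ _).1 hJoin _ G hDside hGside

end Graph

section Formulas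

variable {Ω : Type} [mΩ : MeasurableSpace Ω] {N : ℕ}
  (μ : Measure Ω) [IsProbabilityMeasure μ] (l : Fin N → ℝ)

lemma branch_formula
    (B : ℕ → ℕ → Fin N → Fin N → Ω → ℕ)
    (hB_meas : ∀ n i m j, Measurable (B n i m j))
    (hB_indep : iIndepFun
      (fun q : ℕ × ℕ × Fin N × Fin N => B q.1 q.2.1 q.2.2.1 q.2.2.2) μ)
    (hB_poisson : ∀ n i m j, μ.map (B n i m j) =
      poissonMeasure (Real.toNNReal (l m * l j / ∑ k, l k)))
    (J0 : Ω → Fin N) (hJ0_meas : Measurable J0)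
    (hJ0_indep : IndepFun J0
      (fun ω (q : ℕ × ℕ × Fin N × Fin N) => B q.1 q.2.1 q.2.2.1 q.2.2.2 ω) μ)
    (A : ℕ → Set (Fin N)) (n : ℕ) :
    μ (EBset A B J0 n) = μ (EBset A B J0 0)
      * ∏ k ∈ Finset.range n, stepWeight l (SFA A k) (TFA A k) (SFA A (k+1)) := by
  induction n with
  | zero => simp
  | succ n ih =>
    rw [branch_step μ l B hB_meas hB_indep hB_poisson J0 hJ0_meas hJ0_indep A n, ih,
      Finset.prod_range_succ, mul_assoc]

lemma graph_formula
    (E : Sym2 (Fin N) → Ω → ℕ)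
    (hE_meas : ∀ e, Measurable (E e))
    (hE_indep : iIndepFun E μ)
    (hE_poisson : ∀ e, μ.map (E e) = poissonMeasure (edgeRate l e))
    (i0 : Ω → Fin N) (hi0_meas : Measurable i0)
    (hi0_indep : IndepFun i0 (fun ω e => E e ω) μ)
    (A : ℕ → Set (Fin N)) (n : ℕ)
    (hdisj : ∀ k < n, ∀ x ∈ A (k+1), x ∉ TsetA A k) :
    μ (EGset A E i0 n) = μ (EGset A E i0 0)
      * ∏ k ∈ Finset.range n, stepWeight l (SFA A k) (TFA A k) (SFA A (k+1)) := by
  induction n with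
  | zero => simp
  | succ n ih =>
    rw [graph_step μ l E hE_meas hE_indep hE_poisson i0 hi0_meas hi0_indep A n
        (fun k' hk' => hdisj k' (lt_trans hk' (Nat.lt_succ_self n))),
      ih (fun k' hk' => hdisj k' (lt_trans hk' (Nat.lt_succ_self n))),
      Finset.prod_range_succ, mul_assoc]

end Formulas

/-- Proposition 2.1 of Norros–Reittu, the branching-process
coupling. Conditionally on the capacities `l` (here fixed), the sequence of mark
sets `(Ĵ_k)` of the pruned marked branching process has the same distribution as
the sequence of neighbourhood shells `(N_k)` around a uniformly random vertex of
the conditionally Poissonian graph.  The branching process is encoded by an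
independent family `B n i m j ~ Poisson(l m l j / L_N)` giving the number of
`j`-marked children of the `i`-th individual of generation `n` when it bears mark
`m`, together with an independent uniform root mark `J0`; the graph is encoded by
independent edge counts `E {i,j} ~ Poisson(l i l j / L_N)` and an independent
uniform starting vertex `i0`.  Equality in distribution is expressed through all
finite-dimensional cylinder events. -/
theorem branching_process_coupling
    (τ : ℝ) (hτ : τ ∈ Set.Ioo (2 : ℝ) 3)
    (N : ℕ) (hN : 0 < N)
    (l : Fin N → ℝ) (hl : ∀ i, 1 ≤ l i)
    (Ω : Type) [MeasurableSpace Ω] (μ : Measure Ω) [IsProbabilityMeasure μ]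
    (B : ℕ → ℕ → Fin N → Fin N → Ω → ℕ)
    (hB_meas : ∀ n i m j, Measurable (B n i m j))
    (hB_indep : iIndepFun
      (fun q : ℕ × ℕ × Fin N × Fin N => B q.1 q.2.1 q.2.2.1 q.2.2.2) μ)
    (hB_poisson : ∀ n i m j, μ.map (B n i m j) =
      poissonMeasure (Real.toNNReal (l m * l j / ∑ k, l k)))
    (J0 : Ω → Fin N) (hJ0_meas : Measurable J0)
    (hJ0_unif : ∀ v, μ {ω | J0 ω = v} = (N : ENNReal)⁻¹)
    (hJ0_indep : IndepFun J0
      (fun ω (q : ℕ × ℕ × Fin N × Fin N) => B q.1 q.2.1 q.2.2.1 q.2.2.2 ω) μ)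
    (E : Sym2 (Fin N) → Ω → ℕ)
    (hE_meas : ∀ e, Measurable (E e))
    (hE_indep : iIndepFun E μ)
    (hE_poisson : ∀ e, μ.map (E e) = poissonMeasure (edgeRate l e))
    (i0 : Ω → Fin N) (hi0_meas : Measurable i0)
    (hi0_unif : ∀ v, μ {ω | i0 ω = v} = (N : ENNReal)⁻¹)
    (hi0_indep : IndepFun i0 (fun ω e => E e ω) μ) :
    ∀ (n : ℕ) (A : ℕ → Set (Fin N)),
      μ {ω | ∀ k ≤ n, prunedMarks N (fun a b c d => B a b c d ω) (J0 ω) k = A k} =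
        μ {ω | ∀ k ≤ n, shells N (graphOf fun e => E e ω) (i0 ω) k = A k} := by
  intro n A
  show μ (EBset A B J0 n) = μ (EGset A E i0 n)
  by_cases hdisj : ∀ k < n, ∀ x ∈ A (k+1), x ∉ TsetA A k
  · rw [branch_formula μ l B hB_meas hB_indep hB_poisson J0 hJ0_meas hJ0_indep A n,
      graph_formula μ l E hE_meas hE_indep hE_poisson i0 hi0_meas hi0_indep A n hdisj]
    congr 1
    -- base case: the roots are uniform
    have h1 : EBset A B J0 0 = {ω | ({J0 ω} : Set (Fin N)) = A 0} := by
      ext ω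
      simp only [EBset, Set.mem_setOf_eq, Nat.le_zero]
      constructor
      · intro h
        rw [← prunedMarks_zero (fun a b c d => B a b c d ω) (J0 ω)]
        exact h 0 rfl
      · intro h k hk
        subst hk
        rw [prunedMarks_zero]
        exact h
    have h2 : EGset A E i0 0 = {ω | ({i0 ω} : Set (Fin N)) = A 0} := by
      ext ω
      simp only [EGset, Set.mem_setOf_eq, Nat.le_zero]
      constructor
      · intro h
        exact h 0 rfl
      · intro h k hk
        subst hk
        exact h
    rw [h1, h2]
    by_cases hv : ∃ v, A 0 = {v}
    · obtain ⟨v, hv⟩ := hv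
      have e1 : {ω | ({J0 ω} : Set (Fin N)) = A 0} = {ω | J0 ω = v} := by
        ext ω
        rw [hv]
        simp [Set.singleton_eq_singleton_iff]
      have e2 : {ω | ({i0 ω} : Set (Fin N)) = A 0} = {ω | i0 ω = v} := by
        ext ω
        rw [hv]
        simp [Set.singleton_eq_singleton_iff]
      rw [e1, e2, hJ0_unif v, hi0_unif v]
    · have e1 : {ω | ({J0 ω} : Set (Fin N)) = A 0} = ∅ := by
        ext ω
        simp only [Set.mem_setOf_eq, Set.mem_empty_iff_false, iff_false]
        intro h
        exact hv ⟨J0 ω, h.symm⟩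
      have e2 : {ω | ({i0 ω} : Set (Fin N)) = A 0} = ∅ := by
        ext ω
        simp only [Set.mem_setOf_eq, Set.mem_empty_iff_false, iff_false]
        intro h
        exact hv ⟨i0 ω, h.symm⟩
      rw [e1, e2]
  · -- degenerate case: the target sets are not pairwise admissible, both events are empty
    push_neg at hdisj
    obtain ⟨k, hk, x, hx1, hx2⟩ := hdisj
    have hB0 : EBset A B J0 n = ∅ := by
      ext ω
      simp only [EBset, Set.mem_setOf_eq, Set.mem_empty_iff_false, iff_false]
      intro h
      have hx1' : x ∈ prunedMarks N (fun a b c d => B a b c d ω) (J0 ω) (k+1) := by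
        rw [h (k+1) hk]
        exact hx1
      refine prunedMarks_disj (fun a b c d => B a b c d ω) (J0 ω) k x hx1' ?_
      obtain ⟨k', hk', hx⟩ := hx2
      refine ⟨k', hk', ?_⟩
      rw [h k' (le_trans hk' (le_of_lt hk))]
      exact hx
    have hG0 : EGset A E i0 n = ∅ := by
      ext ω
      simp only [EGset, Set.mem_setOf_eq, Set.mem_empty_iff_false, iff_false]
      intro h
      have hx1' : x ∈ shells N (graphOf fun e => E e ω) (i0 ω) (k+1) := by
        rw [h (k+1) hk]
        exact hx1
      rw [shells_succ] at hx1'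
      refine hx1'.1 ?_
      obtain ⟨k', hk', hx⟩ := hx2
      refine ⟨k', hk', ?_⟩
      rw [h k' (le_trans hk' (le_of_lt hk))]
      exact hx
    rw [hB0, hG0]
end
end
end
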